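/- arXiv:1810.04397 — 10 statements merged into one kernel-verified Lean document; each statement's English description precedes it below -/
import Mathlib

section
/- Let u_1, …, u_k, v_1, …, v_k be pairwise distinct vertices of a finite simple graph G, and let X = {{u_1,v_1}, …, {u_k,v_k}}. Then X is a pairing dominating set of G if and only if every set {x_1, …, x_k} with x_i ∈ {u_i, v_i} for each i ∈ {1,…,k} is a dominating set of G. -/
variable {V : Type*}

/-- `D` dominates every vertex of `G` outside of `A`: each such vertex lies in the
closed neighborhood of some member of `D`. (Take `A = ∅` for ordinary domination.) -/
def Dominates (G : SimpleGraph V) (A : Set V) (D : Finset V) : Prop :=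
  ∀ v : V, v ∉ A → ∃ u ∈ D, u = v ∨ G.Adj u v

/-- Let `u 1, …, u k, v 1, …, v k` be pairwise distinct vertices of a finite simple graph
`G`.  Then `X = {{u 1, v 1}, …, {u k, v k}}` is a pairing dominating set of `G`
(i.e. the closed neighborhoods `N[u i, v i] = N[u i] ∩ N[v i]` cover `V(G)`) if and only if
every set `{x 1, …, x k}` with `x i ∈ {u i, v i}` for each `i` is a dominating set of `G`. -/
theorem pairing_dominating_set_iff [Fintype V] [DecidableEq V] (G : SimpleGraph V)
    (k : ℕ) (u v : Fin k → V) (hdist : Function.Injective (Sum.elim u v)) :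
    (∀ w : V, ∃ i : Fin k, (u i = w ∨ G.Adj (u i) w) ∧ (v i = w ∨ G.Adj (v i) w)) ↔
      (∀ x : Fin k → V, (∀ i : Fin k, x i = u i ∨ x i = v i) →
        Dominates G ∅ (Finset.univ.image x)) := by
  constructor
  · intro h x hx w _
    obtain ⟨i, hu, hv⟩ := h w
    refine ⟨x i, Finset.mem_image_of_mem x (Finset.mem_univ i), ?_⟩
    rcases hx i with h' | h' <;> rw [h']
    · exact hu
    · exact hv
  · intro h w
    by_contra hc
    push_neg at hc
    classical
    set x : Fin k → V := fun i =>
      if (u i = w ∨ G.Adj (u i) w) then v i else u i with hxdef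
    have hx : ∀ i, x i = u i ∨ x i = v i := by
      intro i
      by_cases hi : (u i = w ∨ G.Adj (u i) w) <;> simp [hxdef, hi]
    have hfail : ∀ i, ¬(x i = w ∨ G.Adj (x i) w) := by
      intro i
      by_cases hi : (u i = w ∨ G.Adj (u i) w)
      · have := hc i hi
        simpa [hxdef, hi] using this
      · simpa [hxdef, hi] using hi
    obtain ⟨a, ha, hdom⟩ := h x hx w (Set.notMem_empty w)
    obtain ⟨i, _, rfl⟩ := Finset.mem_image.mp ha
    exact hfail i hdom
end

section
/- (Continuation Principle) Let G be a finite simple graph and A, B ⊆ V(G). If B ⊆ A, then γ_MB(G|A) ≤ γ_MB(G|B) and γ_MB'(G|A) ≤ γ_MB'(G|B). -/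
variable {V : Type*}

/-- `MBWin G A t k D S`: in the Maker-Breaker domination game on `G` where the vertices of
`A` are regarded as already dominated, with `D` the set of vertices selected so far by
Dominator, `S` the set selected so far by Staller, and where it is Dominator's turn if
`t = true` and Staller's turn if `t = false`, Dominator has a strategy guaranteeing that
his selected vertices dominate `V \ A` after he selects at most `k` further vertices.
Players alternately select vertices not previously selected by either player; if no
unselected vertex remains and Dominator's vertices do not dominate, Dominator has lost. -/
inductive MBWin [Fintype V] [DecidableEq V] (G : SimpleGraph V) (A : Set V) :
    Bool → ℕ → Finset V → Finset V → Prop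
  | win (t : Bool) (k : ℕ) (D S : Finset V) : Dominates G A D → MBWin G A t k D S
  | dmove (k : ℕ) (D S : Finset V) (v : V) : v ∉ D → v ∉ S →
      MBWin G A false k (insert v D) S → MBWin G A true (k + 1) D S
  | smove (k : ℕ) (D S : Finset V) : D ∪ S ≠ Finset.univ →
      (∀ v, v ∉ D → v ∉ S → MBWin G A true k D (insert v S)) → MBWin G A false k D S

/-- The Maker-Breaker domination number `γ_MB(G|A)` of the game in which the vertices of `A`
are regarded as already dominated and Dominator moves first: the minimum `m` such that
Dominator has a winning strategy using at most `m` of his own moves, and `⊤ = ∞` if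
Dominator has no winning strategy. -/
noncomputable def gammaMBRes [Fintype V] [DecidableEq V] (G : SimpleGraph V) (A : Set V) :
    ℕ∞ :=
  sInf ((fun m : ℕ => (m : ℕ∞)) '' {m : ℕ | MBWin G A true m ∅ ∅})

/-- `γ_MB'(G|A)`: as `gammaMBRes`, but Staller moves first. -/
noncomputable def gammaMBRes' [Fintype V] [DecidableEq V] (G : SimpleGraph V) (A : Set V) :
    ℕ∞ :=
  sInf ((fun m : ℕ => (m : ℕ∞)) '' {m : ℕ | MBWin G A false m ∅ ∅})

/-- The Maker-Breaker domination number `γ_MB(G)` (Dominator moves first). -/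
noncomputable def gammaMB [Fintype V] [DecidableEq V] (G : SimpleGraph V) : ℕ∞ :=
  gammaMBRes G ∅

/-- The Staller-start Maker-Breaker domination number `γ_MB'(G)`. -/
noncomputable def gammaMB' [Fintype V] [DecidableEq V] (G : SimpleGraph V) : ℕ∞ :=
  gammaMBRes' G ∅

/-- The domination number `γ(G)`: the minimum size of a dominating set of `G`. -/
noncomputable def dominationNumber [Fintype V] (G : SimpleGraph V) : ℕ :=
  sInf {m : ℕ | ∃ D : Finset V, Dominates G ∅ D ∧ D.card = m}

/-- A `γ`-set of `G`: a dominating set of minimum size. -/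
def IsGammaSet [Fintype V] (G : SimpleGraph V) (D : Finset V) : Prop :=
  Dominates G ∅ D ∧ D.card = dominationNumber G

lemma MBWin.mono [Fintype V] [DecidableEq V] {G : SimpleGraph V} {A B : Set V}
    (hBA : B ⊆ A) {t : Bool} {k : ℕ} {D S : Finset V}
    (h : MBWin G B t k D S) : MBWin G A t k D S := by
  induction h with
  | win t k D S hd =>
      exact MBWin.win t k D S (fun v hv => hd v (fun hvB => hv (hBA hvB)))
  | dmove k D S v hvD hvS _ ih => exact MBWin.dmove k D S v hvD hvS ih
  | smove k D S hne _ ih => exact MBWin.smove k D S hne ih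

/-- (Continuation Principle)  Let `G` be a finite simple graph and `A, B ⊆ V(G)`.
If `B ⊆ A`, then `γ_MB(G|A) ≤ γ_MB(G|B)` and `γ_MB'(G|A) ≤ γ_MB'(G|B)`. -/
theorem continuation_principle [Fintype V] [DecidableEq V] (G : SimpleGraph V)
    (A B : Set V) (hBA : B ⊆ A) :
    gammaMBRes G A ≤ gammaMBRes G B ∧ gammaMBRes' G A ≤ gammaMBRes' G B := by
  constructor <;>
    exact sInf_le_sInf (Set.image_mono (fun m hm => MBWin.mono hBA hm))
end

section
/- For all integers r, s, t with 2 ≤ r ≤ s ≤ t, there exists a finite simple graph G such that γ(G) = r, γ_MB(G) = s, and γ_MB'(G) = t. -/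
variable {V : Type*}

section Construction
open Finset

variable {I : Type} [Fintype I] [DecidableEq I]

def gg (owner : I → Option Bool) : SimpleGraph (Bool ⊕ I × Bool) where
  Adj x y :=
    match x, y with
    | Sum.inl a, Sum.inl b => a ≠ b
    | Sum.inl a, Sum.inr (i, _) => owner i = some a
    | Sum.inr (i, _), Sum.inl a => owner i = some a
    | Sum.inr (i, c), Sum.inr (j, d) => i = j ∧ c ≠ d
  symm := by
    refine ⟨?_⟩
    rintro (a | ⟨i, c⟩) (b | ⟨j, d⟩) h
    · exact Ne.symm h
    · exact h
    · exact h
    · exact ⟨h.1.symm, h.2.symm⟩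
  loopless := by
    refine ⟨?_⟩
    rintro (a | ⟨i, c⟩) h
    · exact h rfl
    · exact h.2 rfl

variable (owner : I → Option Bool)

lemma gg_adj_ll {a b : Bool} : (gg owner).Adj (Sum.inl a) (Sum.inl b) ↔ a ≠ b := Iff.rfl
lemma gg_adj_lr {a : Bool} {i : I} {c : Bool} :
    (gg owner).Adj (Sum.inl a) (Sum.inr (i, c)) ↔ owner i = some a := Iff.rfl
lemma gg_adj_rr {i j : I} {c d : Bool} :
    (gg owner).Adj (Sum.inr (i, c)) (Sum.inr (j, d)) ↔ i = j ∧ c ≠ d := Iff.rfl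

/-- pairs that still need a Dominator vertex, if Dominator holds `q b`. -/
def needed (b : Bool) (D : Finset (Bool ⊕ I × Bool)) : Finset I :=
  univ.filter fun i =>
    owner i ≠ some b ∧ Sum.inr (i, false) ∉ D ∧ Sum.inr (i, true) ∉ D

lemma mem_needed {b : Bool} {D : Finset (Bool ⊕ I × Bool)} {i : I} :
    i ∈ needed owner b D ↔
      owner i ≠ some b ∧ Sum.inr (i, false) ∉ D ∧ Sum.inr (i, true) ∉ D := by
  simp [needed]

lemma needed_insert_inl (b b' : Bool) (D : Finset (Bool ⊕ I × Bool)) :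
    needed owner b (insert (Sum.inl b') D) = needed owner b D := by
  ext i; simp [mem_needed]

lemma needed_insert_inr (b : Bool) (j : I) (c : Bool) (D : Finset (Bool ⊕ I × Bool)) :
    needed owner b (insert (Sum.inr (j, c)) D) = (needed owner b D).erase j := by
  ext i
  by_cases hij : i = j
  · subst hij
    cases c <;> simp +contextual [mem_needed]
  · simp [mem_needed, hij, Sum.inr.injEq, Prod.ext_iff]

lemma dominates_of (b : Bool) (D : Finset (Bool ⊕ I × Bool)) (hb : Sum.inl b ∈ D)
    (h : needed owner b D = ∅) : Dominates (gg owner) ∅ D := by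
  rintro (b' | ⟨i, c⟩) -
  · by_cases hbb : b = b'
    · exact ⟨_, hb, Or.inl (by rw [hbb])⟩
    · exact ⟨_, hb, Or.inr hbb⟩
  · by_cases ho : owner i = some b
    · exact ⟨_, hb, Or.inr ho⟩
    · have : i ∉ needed owner b D := by rw [h]; exact notMem_empty i
      rw [mem_needed] at this
      push_neg at this
      rcases Decidable.em (Sum.inr (i, false) ∈ D) with hf | hf
      · cases c
        · exact ⟨_, hf, Or.inl rfl⟩
        · exact ⟨_, hf, Or.inr ⟨rfl, by simp⟩⟩
      · have ht := this ho hf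
        cases c
        · exact ⟨_, ht, Or.inr ⟨rfl, by simp⟩⟩
        · exact ⟨_, ht, Or.inl rfl⟩

end Construction

variable {I : Type} [Fintype I] [DecidableEq I] (owner : I → Option Bool)
open Finset

def threatSet (b : Bool) (D S : Finset (Bool ⊕ I × Bool)) : Finset I :=
  (needed owner b D).filter fun i => Sum.inr (i, false) ∈ S ∨ Sum.inr (i, true) ∈ S

lemma phase2 (b : Bool) : ∀ n : ℕ,
    (∀ D S : Finset (Bool ⊕ I × Bool), Sum.inl b ∈ D → (needed owner b D).card = n →
      (∀ i ∈ needed owner b D, ¬(Sum.inr (i, false) ∈ S ∧ Sum.inr (i, true) ∈ S)) →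
      (threatSet owner b D S).card ≤ 1 → MBWin (gg owner) ∅ true n D S) ∧
    (∀ D S : Finset (Bool ⊕ I × Bool), Sum.inl b ∈ D → (needed owner b D).card = n →
      (∀ i ∈ needed owner b D, Sum.inr (i, false) ∉ S ∧ Sum.inr (i, true) ∉ S) →
      MBWin (gg owner) ∅ false n D S) := by
  intro n
  induction n using Nat.strong_induction_on with
  | _ n IH =>
  have hT : ∀ D S : Finset (Bool ⊕ I × Bool), Sum.inl b ∈ D → (needed owner b D).card = n →
      (∀ i ∈ needed owner b D, ¬(Sum.inr (i, false) ∈ S ∧ Sum.inr (i, true) ∈ S)) →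
      (threatSet owner b D S).card ≤ 1 → MBWin (gg owner) ∅ true n D S := by
    intro D S hb hcard hnoFull hthreat
    rcases Nat.eq_zero_or_pos n with hn | hn
    · subst hn
      exact MBWin.win _ _ _ _ (dominates_of owner b D hb (card_eq_zero.mp hcard))
    · -- choose the pair to play in
      have hpick : ∃ i ∈ needed owner b D,
          ∀ j ∈ (needed owner b D).erase i,
            Sum.inr (j, false) ∉ S ∧ Sum.inr (j, true) ∉ S := by
        by_cases hTS : (threatSet owner b D S).Nonempty
        · obtain ⟨i, hiTS⟩ := hTS
          refine ⟨i, mem_of_mem_filter i hiTS, ?_⟩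
          intro j hj
          have hji : j ≠ i := (mem_erase.mp hj).1
          have hjN : j ∈ needed owner b D := (mem_erase.mp hj).2
          constructor <;> intro hmem
          · exact absurd hthreat (by
              simp only [not_le]
              exact Finset.one_lt_card.mpr
                ⟨j, mem_filter.mpr ⟨hjN, Or.inl hmem⟩, i, hiTS, hji⟩)
          · exact absurd hthreat (by
              simp only [not_le]
              exact Finset.one_lt_card.mpr
                ⟨j, mem_filter.mpr ⟨hjN, Or.inr hmem⟩, i, hiTS, hji⟩)
        · obtain ⟨i, hiN⟩ := card_pos.mp (hcard ▸ hn)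
          refine ⟨i, hiN, ?_⟩
          intro j hj
          have hjN : j ∈ needed owner b D := (mem_erase.mp hj).2
          constructor <;> intro hmem <;>
            exact hTS ⟨j, mem_filter.mpr ⟨hjN, by simp [hmem]⟩⟩
      obtain ⟨i, hiN, hclear'⟩ := hpick
      set c : Bool := if Sum.inr (i, false) ∈ S then true else false with hc
      have hvS : Sum.inr (i, c) ∉ S := by
        by_cases h0 : Sum.inr (i, false) ∈ S
        · have := hnoFull i hiN
          simp only [hc, if_pos h0]
          tauto
        · simp only [hc, if_neg h0]
          exact h0
      have hvD : Sum.inr (i, c) ∉ D := by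
        rcases mem_needed owner |>.mp hiN with ⟨-, h1, h2⟩
        cases c
        · exact h1
        · exact h2
      obtain ⟨n', rfl⟩ : ∃ n', n = n' + 1 := ⟨n - 1, by omega⟩
      clear hn
      refine MBWin.dmove n' D S (Sum.inr (i, c)) hvD hvS ?_
      refine (IH n' (by omega)).2 _ S (mem_insert_of_mem hb) ?_ ?_
      · rw [needed_insert_inr, card_erase_of_mem hiN, hcard]
        omega
      · intro j hj
        rw [needed_insert_inr] at hj
        exact hclear' j hj
  refine ⟨hT, ?_⟩
  intro D S hb hcard hclear
  rcases Nat.eq_zero_or_pos n with hn | hn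
  · subst hn
    exact MBWin.win _ _ _ _ (dominates_of owner b D hb (card_eq_zero.mp hcard))
  · obtain ⟨i, hiN⟩ := card_pos.mp (hcard ▸ hn)
    refine MBWin.smove n D S ?_ ?_
    · intro h
      have hmem : Sum.inr (i, false) ∈ D ∪ S := h ▸ mem_univ _
      rcases mem_union.mp hmem with h' | h'
      · exact ((mem_needed owner).mp hiN).2.1 h'
      · exact (hclear i hiN).1 h'
    · intro v hvD hvS
      refine hT D (insert v S) hb hcard ?_ ?_
      · intro j hj
        rintro ⟨h1, h2⟩
        rcases mem_insert.mp h1 with h1 | h1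
        · rcases mem_insert.mp h2 with h2 | h2
          · rw [← h1] at h2
            exact absurd h2 (by simp)
          · exact (hclear j hj).2 h2
        · exact (hclear j hj).1 h1
      · refine card_le_one.mpr ?_
        intro j hj k hk
        have hj' := mem_filter.mp hj
        have hk' := mem_filter.mp hk
        have hjv : ∃ cj : Bool, v = Sum.inr (j, cj) := by
          rcases hj'.2 with h' | h' <;> rcases mem_insert.mp h' with h'' | h''
          · exact ⟨false, h''.symm⟩
          · exact absurd h'' (hclear j hj'.1).1
          · exact ⟨true, h''.symm⟩
          · exact absurd h'' (hclear j hj'.1).2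
        have hkv : ∃ ck : Bool, v = Sum.inr (k, ck) := by
          rcases hk'.2 with h' | h' <;> rcases mem_insert.mp h' with h'' | h''
          · exact ⟨false, h''.symm⟩
          · exact absurd h'' (hclear k hk'.1).1
          · exact ⟨true, h''.symm⟩
          · exact absurd h'' (hclear k hk'.1).2
        obtain ⟨cj, rfl⟩ := hjv
        obtain ⟨ck, hck⟩ := hkv
        have := Sum.inr.injEq (j, cj) (k, ck) |>.mp hck
        exact congrArg Prod.fst this

lemma MBWin_mono {V : Type*} [Fintype V] [DecidableEq V] {G : SimpleGraph V} {A : Set V}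
    {tb : Bool} {k : ℕ} {D S : Finset V} (h : MBWin G A tb k D S) :
    ∀ k', k ≤ k' → MBWin G A tb k' D S := by
  induction h with
  | win t k D S hdom => exact fun k' _ => MBWin.win _ _ _ _ hdom
  | dmove k D S v hvD hvS hc ih =>
    intro k' hk
    obtain ⟨k'', rfl⟩ : ∃ k'', k' = k'' + 1 := ⟨k' - 1, by omega⟩
    exact MBWin.dmove _ _ _ v hvD hvS (ih k'' (by omega))
  | smove k D S hne hall ih =>
    intro k' hk
    exact MBWin.smove _ _ _ hne fun v h1 h2 => ih v h1 h2 k' hk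

def untouched (D : Finset (Bool ⊕ I × Bool)) : Finset I :=
  univ.filter fun i => owner i = none ∧ Sum.inr (i, false) ∉ D ∧ Sum.inr (i, true) ∉ D

lemma mem_untouched {D : Finset (Bool ⊕ I × Bool)} {i : I} :
    i ∈ untouched owner D ↔
      owner i = none ∧ Sum.inr (i, false) ∉ D ∧ Sum.inr (i, true) ∉ D := by
  simp [untouched]

lemma untouched_insert_inr (j : I) (c : Bool) (D : Finset (Bool ⊕ I × Bool)) :
    untouched owner (insert (Sum.inr (j, c)) D) = (untouched owner D).erase j := by
  ext i
  by_cases hij : i = j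
  · subst hij
    cases c <;> simp [mem_untouched]
  · simp [mem_untouched, hij, Sum.inr.injEq, Prod.ext_iff]

def Inv0 (D S : Finset (Bool ⊕ I × Bool)) : Prop :=
  (∀ b' : Bool, Sum.inl b' ∉ D ∧ Sum.inl b' ∉ S) ∧
  (∀ i c, Sum.inr (i, c) ∈ D → owner i = none ∧ Sum.inr (i, !c) ∈ S) ∧
  (∀ i c, Sum.inr (i, c) ∈ S → owner i = none ∧ Sum.inr (i, !c) ∈ D)

lemma needed_eq_of_free (b₀ : Bool) (D : Finset (Bool ⊕ I × Bool))
    (hD : ∀ i c, Sum.inr (i, c) ∈ D → owner i = none) :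
    needed owner b₀ D = (univ.filter fun i => owner i = some (!b₀)) ∪ untouched owner D := by
  ext i
  simp only [mem_needed, mem_union, mem_filter, mem_univ, true_and, mem_untouched]
  constructor
  · rintro ⟨h1, h2, h3⟩
    cases h : owner i with
    | none => exact Or.inr ⟨rfl, h2, h3⟩
    | some bb =>
      cases b₀ <;> cases bb <;> simp_all
  · rintro (h | ⟨h1, h2, h3⟩)
    · have hb0 : owner i ≠ some b₀ := by rw [h]; cases b₀ <;> simp
      refine ⟨hb0, fun hm => ?_, fun hm => ?_⟩
      · rw [hD i false hm] at h; cases h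
      · rw [hD i true hm] at h; cases h
    · exact ⟨by simp [h1], h2, h3⟩

lemma card_needed_of_free (b₀ : Bool) (D : Finset (Bool ⊕ I × Bool))
    (hD : ∀ i c, Sum.inr (i, c) ∈ D → owner i = none) :
    (needed owner b₀ D).card
      = (univ.filter fun i => owner i = some (!b₀)).card + (untouched owner D).card := by
  rw [needed_eq_of_free owner b₀ D hD]
  refine card_union_of_disjoint ?_
  rw [disjoint_left]
  intro i hi hi'
  rw [mem_filter] at hi
  rw [mem_untouched] at hi'
  rw [hi'.1] at hi
  cases hi.2

lemma pair_notmem_S_of_needed {D' S : Finset (Bool ⊕ I × Bool)} {b₀ : Bool}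
    (hS : ∀ i c, Sum.inr (i, c) ∈ S → Sum.inr (i, !c) ∈ D')
    {j : I} (hj : j ∈ needed owner b₀ D') (c : Bool) : Sum.inr (j, c) ∉ S := by
  intro hmem
  have hD := hS j c hmem
  rcases (mem_needed owner).mp hj with ⟨-, h2, h3⟩
  cases c
  · exact h3 hD
  · exact h2 hD

lemma phase0
    (hac : (univ.filter fun i => owner i = some false).card
         ≤ (univ.filter fun i => owner i = some true).card) :
    ∀ u : ℕ, ∀ D S : Finset (Bool ⊕ I × Bool), Inv0 owner D S →
      (untouched owner D).card = u →
      MBWin (gg owner) ∅ false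
        (1 + (univ.filter fun i => owner i = some true).card + u) D S := by
  intro u
  induction u using Nat.strong_induction_on with
  | _ u IH =>
  intro D S hInv hu
  obtain ⟨hq, hD, hS⟩ := hInv
  set na := (univ.filter fun i => owner i = some false).card with hna
  set nc := (univ.filter fun i => owner i = some true).card with hnc
  have hmb : ∀ b1 : Bool, (univ.filter fun i => owner i = some b1).card ≤ nc := by
    intro b1; cases b1
    · exact hac
    · exact le_refl _
  refine MBWin.smove _ D S ?_ ?_
  · intro h
    have hmem : Sum.inl true ∈ D ∪ S := h ▸ mem_univ _
    rcases mem_union.mp hmem with h' | h'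
    · exact (hq true).1 h'
    · exact (hq true).2 h'
  · rintro (b0 | ⟨i, c⟩) hvD hvS
    · -- Staller took q b0 ; Dominator answers q (!b0)
      have hD'1 : Sum.inl (!b0) ∉ D := (hq (!b0)).1
      have hS'1 : Sum.inl (!b0) ∉ insert (Sum.inl b0) S := by
        simp only [mem_insert]
        rintro (h' | h')
        · rw [Sum.inl.injEq] at h'
          cases b0 <;> simp_all
        · exact (hq (!b0)).2 h'
      have hfree : ∀ i c, Sum.inr (i, c) ∈ insert (Sum.inl (!b0)) D → owner i = none := by
        intro i c hm
        rcases mem_insert.mp hm with h' | h'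
        · cases h'
        · exact (hD i c h').1
      have hcardN : (needed owner (!b0) (insert (Sum.inl (!b0)) D)).card
          = (univ.filter fun i => owner i = some (!(!b0))).card + u := by
        rw [card_needed_of_free owner _ _ hfree]
        congr 1
        · rw [show untouched owner (insert (Sum.inl (!b0)) D) = untouched owner D from by
            ext i; simp [mem_untouched], hu]
      have hchild : MBWin (gg owner) ∅ false
          ((univ.filter fun i => owner i = some (!(!b0))).card + u)
          (insert (Sum.inl (!b0)) D) (insert (Sum.inl b0) S) :=
        (phase2 owner (!b0) _).2 _ _ (mem_insert_self _ _) hcardN (by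
          intro j hj
          have hScl : ∀ i c, Sum.inr (i, c) ∈ insert (Sum.inl b0) S →
              Sum.inr (i, !c) ∈ insert (Sum.inl (!b0)) D := by
            intro i c hm
            rcases mem_insert.mp hm with h' | h'
            · cases h'
            · exact mem_insert_of_mem ((hS i c h').2)
          exact ⟨pair_notmem_S_of_needed owner hScl hj false,
                 pair_notmem_S_of_needed owner hScl hj true⟩)
      have hchild' := MBWin_mono hchild (nc + u) (by
        have := hmb (!(!b0)); omega)
      exact MBWin_mono (MBWin.dmove _ _ _ _ hD'1 hS'1 hchild') _ (by omega)
    · cases hoi : owner i with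
      | some b1 =>
        -- Dominator answers q b1
        have hD'1 : Sum.inl b1 ∉ D := (hq b1).1
        have hS'1 : Sum.inl b1 ∉ insert (Sum.inr (i, c)) S := by
          simp only [mem_insert]
          rintro (h' | h')
          · cases h'
          · exact (hq b1).2 h'
        have hfree : ∀ j c', Sum.inr (j, c') ∈ insert (Sum.inl b1) D → owner j = none := by
          intro j c' hm
          rcases mem_insert.mp hm with h' | h'
          · cases h'
          · exact (hD j c' h').1
        have hcardN : (needed owner b1 (insert (Sum.inl b1) D)).card
            = (univ.filter fun j => owner j = some (!b1)).card + u := by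
          rw [card_needed_of_free owner _ _ hfree]
          congr 1
          rw [show untouched owner (insert (Sum.inl b1) D) = untouched owner D from by
            ext j; simp [mem_untouched], hu]
        have hchild : MBWin (gg owner) ∅ false
            ((univ.filter fun j => owner j = some (!b1)).card + u)
            (insert (Sum.inl b1) D) (insert (Sum.inr (i, c)) S) :=
          (phase2 owner b1 _).2 _ _ (mem_insert_self _ _) hcardN (by
            intro j hj
            have hj' := hj
            rw [mem_needed] at hj'
            have hji : j ≠ i := fun hji => hj'.1 (hji ▸ hoi)
            have hScl : ∀ c', Sum.inr (j, c') ∈ insert (Sum.inr (i, c)) S →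
                Sum.inr (j, !c') ∈ insert (Sum.inl b1) D := by
              intro c' hm
              rcases mem_insert.mp hm with h' | h'
              · rw [Sum.inr.injEq, Prod.mk.injEq] at h'
                exact absurd h'.1 hji
              · exact mem_insert_of_mem ((hS j c' h').2)
            exact ⟨fun hm => hj'.2.2 (by simpa using hScl false hm),
                   fun hm => hj'.2.1 (by simpa using hScl true hm)⟩)
        have hchild' := MBWin_mono hchild (nc + u) (by have := hmb (!b1); omega)
        exact MBWin_mono (MBWin.dmove _ _ _ _ hD'1 hS'1 hchild') _ (by omega)
      | none =>
        -- pair i is untouched; Dominator answers the partner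
        have hiU : i ∈ untouched owner D := by
          rw [mem_untouched]
          refine ⟨hoi, fun hm => ?_, fun hm => ?_⟩
          · have h2 := (hD i false hm).2
            rw [show (!false) = true from rfl] at h2
            cases c
            · exact hvD hm
            · exact hvS h2
          · have h2 := (hD i true hm).2
            rw [show (!true) = false from rfl] at h2
            cases c
            · exact hvS h2
            · exact hvD hm
        have hpD : Sum.inr (i, !c) ∉ D := by
          rw [mem_untouched] at hiU
          cases c
          · exact hiU.2.2
          · exact hiU.2.1
        have hpS : Sum.inr (i, !c) ∉ insert (Sum.inr (i, c)) S := by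
          simp only [mem_insert]
          rintro (h' | h')
          · rw [Sum.inr.injEq, Prod.mk.injEq] at h'
            cases c <;> simp_all
          · have := (hS i (!c) h').2
            rw [Bool.not_not] at this
            exact hvD this
        have hInv' : Inv0 owner (insert (Sum.inr (i, !c)) D) (insert (Sum.inr (i, c)) S) := by
          refine ⟨fun b' => ⟨?_, ?_⟩, ?_, ?_⟩
          · simp only [mem_insert]
            rintro (h' | h')
            · cases h'
            · exact (hq b').1 h'
          · simp only [mem_insert]
            rintro (h' | h')
            · cases h'
            · exact (hq b').2 h'
          · intro j c' hm
            rcases mem_insert.mp hm with h' | h'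
            · rw [Sum.inr.injEq, Prod.mk.injEq] at h'
              obtain ⟨rfl, rfl⟩ := h'
              rw [Bool.not_not]
              exact ⟨hoi, mem_insert_self _ _⟩
            · exact ⟨(hD j c' h').1, mem_insert_of_mem (hD j c' h').2⟩
          · intro j c' hm
            rcases mem_insert.mp hm with h' | h'
            · rw [Sum.inr.injEq, Prod.mk.injEq] at h'
              obtain ⟨rfl, rfl⟩ := h'
              exact ⟨hoi, mem_insert_self _ _⟩
            · exact ⟨(hS j c' h').1, mem_insert_of_mem (hS j c' h').2⟩
        have hu' : (untouched owner (insert (Sum.inr (i, !c)) D)).card = u - 1 := by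
          rw [untouched_insert_inr, card_erase_of_mem hiU, hu]
        have hu1 : 1 ≤ u := by
          rw [← hu]
          exact card_pos.mpr ⟨i, hiU⟩
        have hchild := IH (u - 1) (by omega) _ _ hInv' hu'
        have hchild' := MBWin_mono hchild (nc + u) (by omega)
        exact MBWin_mono (MBWin.dmove _ _ _ _ hpD hpS hchild') _ (by omega)

def helperSet (b : Bool) : Finset (Bool ⊕ I × Bool) :=
  insert (Sum.inl (!b))
    ((univ.filter fun i => owner i = some (!b)).biUnion fun i =>
      {Sum.inr (i, false), Sum.inr (i, true)})

lemma inl_mem_helperSet {b b' : Bool} : Sum.inl b' ∈ helperSet owner b ↔ b' = !b := by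
  simp [helperSet]

lemma inr_mem_helperSet {b : Bool} {i : I} {c : Bool} :
    Sum.inr (i, c) ∈ helperSet owner b ↔ owner i = some (!b) := by
  constructor
  · intro h
    rcases mem_insert.mp h with h' | h'
    · cases h'
    · obtain ⟨j, hj, hmem⟩ := mem_biUnion.mp h'
      rcases mem_insert.mp hmem with h'' | h''
      · rw [Sum.inr.injEq, Prod.mk.injEq] at h''
        exact h''.1 ▸ (mem_filter.mp hj).2
      · rw [mem_singleton, Sum.inr.injEq, Prod.mk.injEq] at h''
        exact h''.1 ▸ (mem_filter.mp hj).2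
  · intro h
    refine mem_insert_of_mem (mem_biUnion.mpr ⟨i, mem_filter.mpr ⟨mem_univ _, h⟩, ?_⟩)
    cases c
    · exact mem_insert_self _ _
    · exact mem_insert_of_mem (mem_singleton_self _)

def ffn (b : Bool) (D : Finset (Bool ⊕ I × Bool)) : ℕ :=
  (needed owner (!b) D).card + (if (D ∩ helperSet owner b).Nonempty then 0 else 1)

lemma ffn_insert (b : Bool) (v : Bool ⊕ I × Bool) (D : Finset (Bool ⊕ I × Bool)) :
    ffn owner b D ≤ ffn owner b (insert v D) + 1 := by
  by_cases hv : v ∈ helperSet owner b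
  · have hcards : (needed owner (!b) (insert v D)).card = (needed owner (!b) D).card := by
      rcases v with b' | ⟨j, c⟩
      · rw [needed_insert_inl]
      · rw [needed_insert_inr]
        rw [inr_mem_helperSet] at hv
        rw [erase_eq_of_notMem]
        intro hmem
        exact ((mem_needed owner).mp hmem).1 hv
    unfold ffn
    rw [hcards]
    have : (if (D ∩ helperSet owner b).Nonempty then 0 else 1) ≤ 1 := by
      split <;> omega
    omega
  · have hint : insert v D ∩ helperSet owner b = D ∩ helperSet owner b :=
      insert_inter_of_notMem hv
    have hcards : (needed owner (!b) D).card ≤ (needed owner (!b) (insert v D)).card + 1 := by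
      rcases v with b' | ⟨j, c⟩
      · rw [needed_insert_inl]
        omega
      · rw [needed_insert_inr]
        by_cases hj : j ∈ needed owner (!b) D
        · rw [card_erase_of_mem hj]
          omega
        · rw [erase_eq_of_notMem hj]
          omega
    unfold ffn
    rw [hint]
    omega

lemma ffn_base (b : Bool) (D : Finset (Bool ⊕ I × Bool)) :
    (univ.filter fun i => owner i ≠ some (!b)).card + 1 ≤ ffn owner b D + D.card := by
  induction D using Finset.induction_on with
  | empty =>
    have h1 : needed owner (!b) (∅ : Finset (Bool ⊕ I × Bool))
        = univ.filter fun i => owner i ≠ some (!b) := by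
      ext i
      simp [mem_needed]
    have h2 : ((∅ : Finset (Bool ⊕ I × Bool)) ∩ helperSet owner b) = ∅ := empty_inter _
    simp [ffn, h1, h2]
  | @insert a Dold ha IH =>
    have h1 := ffn_insert owner b a Dold
    have h2 : (insert a Dold).card = Dold.card + 1 := card_insert_of_notMem ha
    omega

lemma lb_main (b : Bool) {tb : Bool} {k : ℕ} {D S : Finset (Bool ⊕ I × Bool)}
    (h : MBWin (gg owner) ∅ tb k D S) :
    Sum.inl b ∈ S → Sum.inl b ∉ D → ffn owner b D ≤ k := by
  induction h with
  | win t k D S hdom =>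
    intro hS hD
    have hnd : needed owner (!b) D = ∅ := by
      rw [eq_empty_iff_forall_notMem]
      intro i hi
      obtain ⟨hne, h2, h3⟩ := (mem_needed owner).mp hi
      obtain ⟨u, hu, hor⟩ := hdom (Sum.inr (i, false)) (by simp)
      rcases u with b'' | ⟨j, d⟩
      · rcases hor with h' | h'
        · cases h'
        · have hadj : owner i = some b'' := h'
          have : b'' = b := by
            cases b <;> cases b'' <;> simp_all
          rw [this] at hu
          exact hD hu
      · rcases hor with h' | h'
        · rw [Sum.inr.injEq, Prod.mk.injEq] at h'
          obtain ⟨rfl, rfl⟩ := h'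
          exact h2 hu
        · have hadj : j = i ∧ d ≠ false := h'
          obtain ⟨rfl, hd⟩ := hadj
          have : d = true := by cases d <;> simp_all
          rw [this] at hu
          exact h3 hu
    have hhh : (D ∩ helperSet owner b).Nonempty := by
      obtain ⟨u, hu, hor⟩ := hdom (Sum.inl (!b)) (by simp)
      rcases u with b'' | ⟨j, d⟩
      · rcases hor with h' | h'
        · rw [Sum.inl.injEq] at h'
          refine ⟨Sum.inl b'', mem_inter.mpr ⟨hu, ?_⟩⟩
          rw [inl_mem_helperSet]
          exact h'
        · have hadj : b'' ≠ !b := h'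
          have : b'' = b := by cases b <;> cases b'' <;> simp_all
          rw [this] at hu
          exact absurd hu hD
      · rcases hor with h' | h'
        · cases h'
        · have hadj : owner j = some (!b) := h'
          exact ⟨Sum.inr (j, d), mem_inter.mpr ⟨hu, (inr_mem_helperSet owner).mpr hadj⟩⟩
    simp [ffn, hnd, hhh]
  | dmove k D S v hvD hvS hc ih =>
    intro hS hD
    have hvb : Sum.inl b ∉ insert v D := by
      rw [mem_insert]
      rintro (h' | h')
      · exact hvS (h' ▸ hS)
      · exact hD h'
    have := ih hS hvb
    have := ffn_insert owner b v D
    omega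
  | smove k D S hne hall ih =>
    intro hS hD
    have hex : ∃ v, v ∉ D ∪ S := by
      by_contra hcon
      push_neg at hcon
      exact hne (eq_univ_of_forall hcon)
    obtain ⟨v, hv⟩ := hex
    rw [mem_union] at hv
    push_neg at hv
    exact ih v hv.1 hv.2 (mem_insert_of_mem hS) hD

lemma card_filter_ne (b : Bool) : (univ.filter fun i => owner i ≠ some b).card
    = (univ.filter fun i => owner i = some (!b)).card
      + (univ.filter fun i => owner i = none).card := by
  rw [← card_union_of_disjoint (by
    rw [disjoint_left]
    intro i hi hi'
    rw [mem_filter] at hi hi'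
    rw [hi'.2] at hi
    cases hi.2)]
  congr 1
  ext i
  simp only [mem_filter, mem_univ, true_and, mem_union]
  cases h : owner i with
  | none => cases b <;> simp
  | some bb => cases b <;> cases bb <;> simp

def cls : (Bool ⊕ I × Bool) → Bool ⊕ I := fun w =>
  match w with
  | Sum.inl b => Sum.inl b
  | Sum.inr (i, _) =>
    match owner i with
    | some b' => Sum.inl b'
    | none => Sum.inr i

lemma cls_dominator {D : Finset (Bool ⊕ I × Bool)} (hdom : Dominates (gg owner) ∅ D)
    (i₀ : I) {b : Bool} (hb : owner i₀ = some b) : Sum.inl b ∈ D.image (cls owner) := by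
  obtain ⟨u, hu, hor⟩ := hdom (Sum.inr (i₀, false)) (by simp)
  refine mem_image.mpr ⟨u, hu, ?_⟩
  rcases u with b'' | ⟨j, d⟩
  · rcases hor with h' | h'
    · cases h'
    · have hadj : owner i₀ = some b'' := h'
      rw [hb] at hadj
      rw [Option.some.injEq] at hadj
      simp [cls, hadj]
  · rcases hor with h' | h'
    · rw [Sum.inr.injEq, Prod.mk.injEq] at h'
      obtain ⟨rfl, -⟩ := h'
      simp [cls, hb]
    · have hadj : j = i₀ ∧ d ≠ false := h'
      obtain ⟨rfl, -⟩ := hadj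
      simp [cls, hb]

lemma cls_free {D : Finset (Bool ⊕ I × Bool)} (hdom : Dominates (gg owner) ∅ D)
    (i : I) (hb : owner i = none) : Sum.inr i ∈ D.image (cls owner) := by
  obtain ⟨u, hu, hor⟩ := hdom (Sum.inr (i, false)) (by simp)
  refine mem_image.mpr ⟨u, hu, ?_⟩
  rcases u with b'' | ⟨j, d⟩
  · rcases hor with h' | h'
    · cases h'
    · have hadj : owner i = some b'' := h'
      rw [hb] at hadj
      cases hadj
  · rcases hor with h' | h'
    · rw [Sum.inr.injEq, Prod.mk.injEq] at h'
      obtain ⟨rfl, -⟩ := h'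
      simp [cls, hb]
    · have hadj : j = i ∧ d ≠ false := h'
      obtain ⟨rfl, -⟩ := hadj
      simp [cls, hb]

lemma dom_card_lb (hna : 0 < (univ.filter fun i => owner i = some false).card)
    (hnc : 0 < (univ.filter fun i => owner i = some true).card)
    {D : Finset (Bool ⊕ I × Bool)} (hdom : Dominates (gg owner) ∅ D) :
    2 + (univ.filter fun i => owner i = none).card ≤ D.card := by
  obtain ⟨iA, hiA⟩ := card_pos.mp hna
  obtain ⟨iC, hiC⟩ := card_pos.mp hnc
  rw [mem_filter] at hiA hiC
  have key : insert (Sum.inl false : Bool ⊕ I) (insert (Sum.inl true : Bool ⊕ I)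
      ((univ.filter fun i => owner i = none).image (Sum.inr : I → Bool ⊕ I))) ⊆ D.image (cls owner) := by
    intro x hx
    rcases mem_insert.mp hx with rfl | hx
    · exact cls_dominator owner hdom iA hiA.2
    rcases mem_insert.mp hx with rfl | hx
    · exact cls_dominator owner hdom iC hiC.2
    obtain ⟨i, hi, rfl⟩ := mem_image.mp hx
    exact cls_free owner hdom i (mem_filter.mp hi).2
  have hnm2 : (Sum.inl true : Bool ⊕ I) ∉ (univ.filter fun i => owner i = none).image Sum.inr := by
    simp
  have hnm1 : (Sum.inl false : Bool ⊕ I) ∉ insert (Sum.inl true : Bool ⊕ I)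
      ((univ.filter fun i => owner i = none).image (Sum.inr : I → Bool ⊕ I)) := by
    simp
  have hcard : (insert (Sum.inl false : Bool ⊕ I) (insert (Sum.inl true : Bool ⊕ I)
      ((univ.filter fun i => owner i = none).image (Sum.inr : I → Bool ⊕ I)))).card
      = 2 + (univ.filter fun i => owner i = none).card := by
    rw [card_insert_of_notMem hnm1, card_insert_of_notMem hnm2,
      card_image_of_injective _ Sum.inr_injective]
    omega
  calc 2 + (univ.filter fun i => owner i = none).card
      = _ := hcard.symm
    _ ≤ (D.image (cls owner)).card := card_le_card key
    _ ≤ D.card := card_image_le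

lemma dom_ub : ∃ D₀ : Finset (Bool ⊕ I × Bool), Dominates (gg owner) ∅ D₀ ∧
    D₀.card = 2 + (univ.filter fun i => owner i = none).card := by
  refine ⟨insert (Sum.inl false) (insert (Sum.inl true)
    ((univ.filter fun i => owner i = none).image fun i => Sum.inr (i, true))), ?_, ?_⟩
  · rintro (b' | ⟨i, c⟩) -
    · refine ⟨Sum.inl b', ?_, Or.inl rfl⟩
      cases b'
      · exact mem_insert_self _ _
      · exact mem_insert_of_mem (mem_insert_self _ _)
    · cases h : owner i with
      | some b' =>
        refine ⟨Sum.inl b', ?_, Or.inr h⟩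
        cases b'
        · exact mem_insert_self _ _
        · exact mem_insert_of_mem (mem_insert_self _ _)
      | none =>
        refine ⟨Sum.inr (i, true), mem_insert_of_mem (mem_insert_of_mem
          (mem_image.mpr ⟨i, mem_filter.mpr ⟨mem_univ _, h⟩, rfl⟩)), ?_⟩
        cases c
        · exact Or.inr ⟨rfl, by simp⟩
        · exact Or.inl rfl
  · rw [card_insert_of_notMem (by simp), card_insert_of_notMem (by simp),
      card_image_of_injective _ (fun a b h => by
        rw [Sum.inr.injEq, Prod.mk.injEq] at h
        exact h.1)]
    omega

lemma mbwin_D_ub :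
    MBWin (gg owner) ∅ true
      ((univ.filter fun i => owner i = some false).card
        + (univ.filter fun i => owner i = none).card + 1) ∅ ∅ := by
  refine MBWin.dmove _ _ _ (Sum.inl true) (notMem_empty _) (notMem_empty _) ?_
  refine (phase2 owner true _).2 _ _ (mem_insert_self _ _) ?_
    (fun j hj => ⟨notMem_empty _, notMem_empty _⟩)
  rw [needed_insert_inl]
  have h1 : needed owner true (∅ : Finset (Bool ⊕ I × Bool))
      = univ.filter fun i => owner i ≠ some true := by
    ext i; simp [mem_needed]
  rw [h1, card_filter_ne]
  simp

lemma mbwin_S_ub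
    (hac : (univ.filter fun i => owner i = some false).card
         ≤ (univ.filter fun i => owner i = some true).card) :
    MBWin (gg owner) ∅ false
      (1 + (univ.filter fun i => owner i = some true).card
        + (univ.filter fun i => owner i = none).card) ∅ ∅ := by
  refine phase0 owner hac _ ∅ ∅ ?_ ?_
  · exact ⟨fun b' => ⟨notMem_empty _, notMem_empty _⟩,
      fun i c h => absurd h (notMem_empty _), fun i c h => absurd h (notMem_empty _)⟩
  · congr 1
    ext i
    simp [mem_untouched]

lemma mbwin_D_lb
    (hac : (univ.filter fun i => owner i = some false).card
         ≤ (univ.filter fun i => owner i = some true).card)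
    (hna : 0 < (univ.filter fun i => owner i = some false).card)
    (hnc : 0 < (univ.filter fun i => owner i = some true).card)
    {k : ℕ} (h : MBWin (gg owner) ∅ true k ∅ ∅) :
    (univ.filter fun i => owner i = some false).card
      + (univ.filter fun i => owner i = none).card + 1 ≤ k := by
  rcases h with ⟨_, _, _, _, hdom⟩ | ⟨k, _, _, v, hv1, hv2, hc⟩
  · obtain ⟨u, hu, -⟩ := hdom (Sum.inl true) (by simp)
    exact absurd hu (notMem_empty _)
  · set b0 : Bool := if v = Sum.inl true then false else true with hb0
    have hb0v : Sum.inl b0 ≠ v := by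
      by_cases hv' : v = Sum.inl true
      · rw [hb0, if_pos hv', hv']
        simp
      · rw [hb0, if_neg hv']
        exact fun hcon => hv' hcon.symm
    rcases hc with ⟨_, _, _, _, hdom⟩ | _ | ⟨_, _, _, hne, hall⟩
    · have := dom_card_lb owner hna hnc hdom
      rw [card_insert_of_notMem (notMem_empty _), card_empty] at this
      omega
    · have h3 := hall (Sum.inl b0) (by
        rw [mem_insert]
        rintro (h' | h')
        · exact hb0v h'
        · exact notMem_empty _ h') (notMem_empty _)
      have h4 := lb_main owner b0 h3 (mem_insert_self _ _) (by
        rw [mem_insert]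
        rintro (h' | h')
        · exact hb0v h'
        · exact notMem_empty _ h')
      have h5 := ffn_base owner b0 (insert v ∅)
      rw [card_insert_of_notMem (notMem_empty _), card_empty, card_filter_ne] at h5
      have h6 : (univ.filter fun i => owner i = some false).card
          ≤ (univ.filter fun i => owner i = some b0).card := by
        cases b0
        · exact le_refl _
        · exact hac
      have h7 : (univ.filter fun i => owner i = some (!(!b0))).card
          = (univ.filter fun i => owner i = some b0).card := by
        rw [Bool.not_not]
      rw [h7] at h5
      omega

lemma mbwin_S_lb {k : ℕ} (h : MBWin (gg owner) ∅ false k ∅ ∅) :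
    1 + (univ.filter fun i => owner i = some true).card
      + (univ.filter fun i => owner i = none).card ≤ k := by
  rcases h with ⟨_, _, _, _, hdom⟩ | _ | ⟨_, _, _, hne, hall⟩
  · obtain ⟨u, hu, -⟩ := hdom (Sum.inl true) (by simp)
    exact absurd hu (notMem_empty _)
  · have h3 := hall (Sum.inl true) (notMem_empty _) (notMem_empty _)
    have h4 := lb_main owner true h3 (mem_insert_self _ _) (notMem_empty _)
    have h5 := ffn_base owner true ∅
    rw [card_empty, card_filter_ne] at h5
    have h7 : (univ.filter fun i => owner i = some (!(!true))).card
        = (univ.filter fun i => owner i = some true).card := by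
      rw [Bool.not_not]
    rw [h7] at h5
    omega


lemma sInf_image_eq {P : ℕ → Prop} {m : ℕ} (hm : P m) (hlb : ∀ k, P k → m ≤ k) :
    sInf ((fun m : ℕ => (m : ℕ∞)) '' {k | P k}) = (m : ℕ∞) := by
  apply le_antisymm
  · exact sInf_le ⟨m, hm, rfl⟩
  · refine le_sInf ?_
    rintro x ⟨k, hk, rfl⟩
    exact Nat.cast_le.mpr (hlb k hk)

section Main
open Finset
variable {I : Type} [Fintype I] [DecidableEq I] (owner : I → Option Bool)

lemma main_gamma (hna : 0 < (univ.filter fun i => owner i = some false).card)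
    (hnc : 0 < (univ.filter fun i => owner i = some true).card) :
    dominationNumber (gg owner) = 2 + (univ.filter fun i => owner i = none).card := by
  unfold dominationNumber
  obtain ⟨D₀, hdom₀, hcard₀⟩ := dom_ub owner
  apply le_antisymm
  · exact Nat.sInf_le ⟨D₀, hdom₀, hcard₀⟩
  · obtain ⟨D, hdom, hcard⟩ := Nat.sInf_mem
      (⟨2 + (univ.filter fun i => owner i = none).card, D₀, hdom₀, hcard₀⟩ :
        Set.Nonempty {m : ℕ | ∃ D : Finset (Bool ⊕ I × Bool),
          Dominates (gg owner) ∅ D ∧ D.card = m})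
    rw [← hcard]
    exact dom_card_lb owner hna hnc hdom

lemma main_MB
    (hac : (univ.filter fun i => owner i = some false).card
         ≤ (univ.filter fun i => owner i = some true).card)
    (hna : 0 < (univ.filter fun i => owner i = some false).card)
    (hnc : 0 < (univ.filter fun i => owner i = some true).card) :
    gammaMB (gg owner) = (((univ.filter fun i => owner i = some false).card
      + (univ.filter fun i => owner i = none).card + 1 : ℕ) : ℕ∞) := by
  unfold gammaMB gammaMBRes
  exact sInf_image_eq (mbwin_D_ub owner) (fun k hk => mbwin_D_lb owner hac hna hnc hk)

lemma main_MB'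
    (hac : (univ.filter fun i => owner i = some false).card
         ≤ (univ.filter fun i => owner i = some true).card) :
    gammaMB' (gg owner) = ((1 + (univ.filter fun i => owner i = some true).card
      + (univ.filter fun i => owner i = none).card : ℕ) : ℕ∞) := by
  unfold gammaMB' gammaMBRes'
  exact sInf_image_eq (mbwin_S_ub owner hac) (fun k hk => mbwin_S_lb owner hk)

end Main

def owner₀ (m1 m2 kk : ℕ) : (Fin m1 ⊕ Fin m2 ⊕ Fin kk) → Option Bool :=
  Sum.elim (fun _ => some false) (Sum.elim (fun _ => some true) (fun _ => none))

open Finset in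
lemma count_inst (m1 m2 kk : ℕ) :
    (univ.filter fun i => owner₀ m1 m2 kk i = some false).card = m1
  ∧ (univ.filter fun i => owner₀ m1 m2 kk i = some true).card = m2
  ∧ (univ.filter fun i => owner₀ m1 m2 kk i = none).card = kk := by
  refine ⟨?_, ?_, ?_⟩ <;>
  · rw [Finset.card_filter, Fintype.sum_sum_type]
    simp only [owner₀, Sum.elim_inl, Sum.elim_inr]
    rw [Fintype.sum_sum_type]
    simp

/-- For all integers `r, s, t` with `2 ≤ r ≤ s ≤ t`, there exists a finite simple graph `G`
such that `γ(G) = r`, `γ_MB(G) = s`, and `γ_MB'(G) = t`. -/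
theorem realization_gamma_gammaMB_gammaMB' (r s t : ℕ) (h2 : 2 ≤ r) (hrs : r ≤ s)
    (hst : s ≤ t) :
    ∃ (W : Type) (iF : Fintype W) (iD : DecidableEq W) (G : SimpleGraph W),
      @dominationNumber W iF G = r ∧
      @gammaMB W iF iD G = (s : ℕ∞) ∧
      @gammaMB' W iF iD G = (t : ℕ∞) := by
  obtain ⟨hc1, hc2, hc3⟩ := count_inst (s - r + 1) (t - r + 1) (r - 2)
  refine ⟨Bool ⊕ ((Fin (s - r + 1) ⊕ Fin (t - r + 1) ⊕ Fin (r - 2)) × Bool), inferInstance,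
    inferInstance, gg (owner₀ (s - r + 1) (t - r + 1) (r - 2)), ?_, ?_, ?_⟩
  · rw [main_gamma _ (by omega) (by omega), hc3]
    omega
  · rw [main_MB _ (by omega) (by omega) (by omega), hc1, hc3]
    congr 1
    omega
  · rw [main_MB' _ (by omega), hc2, hc3]
    congr 1
    omega
end

section
/- For every integer t ≥ 1, there exists a finite simple graph G with γ(G) = 1, γ_MB(G) = 1, and γ_MB'(G) = t. (For instance, the graph G_t obtained from t disjoint triangles by identifying one vertex of each triangle into a single vertex of degree 2t has these values.) -/
variable {V : Type*}

-- auxiliary development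
abbrev MBWVert (t : ℕ) : Type := Option (Fin t × Bool)

def Gg (t : ℕ) : SimpleGraph (MBWVert t) where
  Adj u v := u ≠ v ∧ ∀ a b, u = some a → v = some b → a.1 = b.1
  symm := ⟨by
    rintro u v ⟨h1, h2⟩
    exact ⟨fun e => h1 e.symm, fun a b ha hb => (h2 b a hb ha).symm⟩⟩
  loopless := ⟨fun u h => h.1 rfl⟩

lemma adj_none {t : ℕ} (a : Fin t × Bool) : (Gg t).Adj none (some a) :=
  ⟨by simp, by intro a b ha; exact absurd ha (by simp)⟩

lemma adj_none' {t : ℕ} (a : Fin t × Bool) : (Gg t).Adj (some a) none :=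
  ((Gg t).adj_symm (adj_none a))

lemma adj_pair {t : ℕ} (i : Fin t) {x y : Bool} (h : x ≠ y) :
    (Gg t).Adj (some (i, x)) (some (i, y)) := by
  refine ⟨by simp [h], ?_⟩
  rintro a b ⟨rfl⟩ ⟨rfl⟩
  rfl

def badset (t : ℕ) (D : Finset (MBWVert t)) : Finset (Fin t) :=
  Finset.univ.filter (fun i => ∀ x, some (i, x) ∉ D)

lemma mem_badset {t : ℕ} {D : Finset (MBWVert t)} {i : Fin t} :
    i ∈ badset t D ↔ ∀ x, some (i, x) ∉ D := by
  simp [badset]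

lemma badset_insert {t : ℕ} (j : Fin t) (y : Bool) (D : Finset (MBWVert t)) :
    badset t (insert (some (j, y)) D) = (badset t D).erase j := by
  ext i
  simp only [mem_badset, Finset.mem_erase, Finset.mem_insert]
  constructor
  · intro h
    refine ⟨?_, fun x hx => h x (Or.inr hx)⟩
    rintro rfl
    exact h y (Or.inl rfl)
  · rintro ⟨hij, h⟩ x hx
    rcases hx with hx | hx
    · exact hij (by injection hx with h'; exact congrArg Prod.fst h')
    · exact h x hx

lemma dom_of_allgood {t : ℕ} (ht : 1 ≤ t) {D : Finset (MBWVert t)}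
    (h : ∀ i : Fin t, ∃ x, some (i, x) ∈ D) : Dominates (Gg t) ∅ D := by
  intro v _
  match v with
  | none =>
      obtain ⟨x, hx⟩ := h ⟨0, ht⟩
      exact ⟨some (⟨0, ht⟩, x), hx, Or.inr (adj_none' _)⟩
  | some (i, y) =>
      obtain ⟨x, hx⟩ := h i
      by_cases hxy : x = y
      · exact ⟨some (i, x), hx, Or.inl (by rw [hxy])⟩
      · exact ⟨some (i, x), hx, Or.inr (adj_pair i hxy)⟩

lemma dom_of_badset_empty {t : ℕ} (ht : 1 ≤ t) {D : Finset (MBWVert t)}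
    (h : badset t D = ∅) : Dominates (Gg t) ∅ D := by
  apply dom_of_allgood ht
  intro i
  have := Finset.notMem_empty i
  rw [← h, mem_badset] at this
  push_neg at this
  simpa using this

/-- Combined Dominator-strategy lemma (Staller's turn / Dominator's turn). -/
lemma ABkey {t : ℕ} (ht : 1 ≤ t) : ∀ k : ℕ,
    (∀ D S : Finset (MBWVert t), (badset t D).card ≤ k →
      (∀ i ∈ badset t D, ∀ x, some (i, x) ∉ S) →
      MBWin (Gg t) ∅ false k D S) ∧
    (∀ D S : Finset (MBWVert t), (badset t D).card ≤ k →
      (∃ i₀ : Fin t, (∀ i ∈ badset t D, i ≠ i₀ → ∀ x, some (i, x) ∉ S) ∧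
        (i₀ ∈ badset t D → ∃ x, some (i₀, x) ∉ S)) →
      MBWin (Gg t) ∅ true k D S) := by
  intro k
  induction k with
  | zero =>
      constructor
      all_goals {
        intro D S hcard _
        have hempty : badset t D = ∅ := Finset.card_eq_zero.mp (Nat.le_zero.mp hcard)
        exact MBWin.win _ _ _ _ (dom_of_badset_empty ht hempty) }
  | succ k ih =>
      -- Dominator's turn with budget k+1
      have hB : ∀ D S : Finset (MBWVert t), (badset t D).card ≤ k + 1 →
          (∃ i₀ : Fin t, (∀ i ∈ badset t D, i ≠ i₀ → ∀ x, some (i, x) ∉ S) ∧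
            (i₀ ∈ badset t D → ∃ x, some (i₀, x) ∉ S)) →
          MBWin (Gg t) ∅ true (k + 1) D S := by
        intro D S hcard ⟨i₀, h1, h2⟩
        rcases Finset.eq_empty_or_nonempty (badset t D) with hempty | ⟨j, hj⟩
        · exact MBWin.win _ _ _ _ (dom_of_badset_empty ht hempty)
        · by_cases hi₀ : i₀ ∈ badset t D
          · obtain ⟨x, hx⟩ := h2 hi₀
            refine MBWin.dmove _ _ _ _ (mem_badset.mp hi₀ x) hx ?_
            apply ih.1
            · rw [badset_insert]
              have := Finset.card_erase_of_mem hi₀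
              omega
            · intro i hi x'
              rw [badset_insert] at hi
              exact h1 i (Finset.mem_of_mem_erase hi) (Finset.ne_of_mem_erase hi) x'
          · have hji : j ≠ i₀ := fun e => hi₀ (e ▸ hj)
            refine MBWin.dmove _ _ _ _ (mem_badset.mp hj true) (h1 j hj hji true) ?_
            apply ih.1
            · rw [badset_insert]
              have := Finset.card_erase_of_mem hj
              omega
            · intro i hi x'
              rw [badset_insert] at hi
              have hi1 := Finset.mem_of_mem_erase hi
              exact h1 i hi1 (fun e => hi₀ (e ▸ hi1)) x'
      refine ⟨?_, hB⟩
      -- Staller's turn with budget k+1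
      intro D S hcard hfree
      rcases Finset.eq_empty_or_nonempty (badset t D) with hempty | ⟨j, hj⟩
      · exact MBWin.win _ _ _ _ (dom_of_badset_empty ht hempty)
      · have hjD := mem_badset.mp hj
        have hne : D ∪ S ≠ Finset.univ := by
          intro h
          have : some (j, true) ∈ D ∪ S := h ▸ Finset.mem_univ _
          rcases Finset.mem_union.mp this with h' | h'
          · exact hjD true h'
          · exact hfree j hj true h'
        refine MBWin.smove _ _ _ hne ?_
        intro v hvD hvS
        rcases v with _ | ⟨j', y⟩
        · -- Staller took the centre
          apply hB D (insert none S) hcard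
          refine ⟨j, ?_, ?_⟩
          · intro i hi _ x hmem
            rcases Finset.mem_insert.mp hmem with h' | h'
            · exact nomatch h'
            · exact hfree i hi x h'
          · intro _
            refine ⟨true, fun hmem => ?_⟩
            rcases Finset.mem_insert.mp hmem with h' | h'
            · exact nomatch h'
            · exact hfree j hj true h'
        · apply hB D (insert (some (j', y)) S) hcard
          refine ⟨j', ?_, ?_⟩
          · intro i hi hine x hmem
            rcases Finset.mem_insert.mp hmem with h' | h'
            · exact hine (by injection h' with h''; exact congrArg Prod.fst h'')
            · exact hfree i hi x h'
          · intro hbad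
            refine ⟨!y, fun hmem => ?_⟩
            rcases Finset.mem_insert.mp hmem with h' | h'
            · injection h' with h''
              exact Bool.not_ne_self y (congrArg Prod.snd h'')
            · exact hfree j' hbad (!y) h'

/-- Lower bound: once Staller holds the centre, Dominator needs at least one move
per undominated pair. -/
lemma lowkey {t : ℕ} : ∀ {b : Bool} {k : ℕ} {D S : Finset (MBWVert t)},
    MBWin (Gg t) ∅ b k D S → none ∉ D → none ∈ S → (badset t D).card ≤ k := by
  intro b k D S h
  induction h with
  | win b' k' D' S' hdom =>
      intro hD _
      have hempty : badset t D' = ∅ := by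
        rw [Finset.eq_empty_iff_forall_notMem]
        intro i hi
        obtain ⟨u, huD, hu⟩ := hdom (some (i, true)) (Set.notMem_empty _)
        have hu_ne : u ≠ none := fun e => hD (e ▸ huD)
        rcases u with _ | a
        · exact hu_ne rfl
        · rcases hu with hu | hu
          · exact mem_badset.mp hi true (hu ▸ huD)
          · have : a.1 = i := hu.2 a (i, true) rfl rfl
            exact mem_badset.mp hi a.2 (by rwa [← this, Prod.mk.eta])
      simp [hempty]
  | dmove k' D' S' v hvD hvS h ih =>
      intro hD hS
      have hv : v ≠ none := fun e => hvS (e ▸ hS)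
      rcases v with _ | ⟨j, y⟩
      · exact absurd rfl hv
      · have hD' : none ∉ insert (some (j, y)) D' := by
          intro hmem
          rcases Finset.mem_insert.mp hmem with h' | h'
          · exact nomatch h'
          · exact hD h'
        have hcard := ih hD' hS
        rw [badset_insert] at hcard
        have hle : (badset t D').card ≤ ((badset t D').erase j).card + 1 := by
          by_cases hj : j ∈ badset t D'
          · rw [Finset.card_erase_of_mem hj]
            omega
          · rw [Finset.erase_eq_of_notMem hj]
            omega
        omega
  | smove k' D' S' hne h ih =>
      intro hD hS
      obtain ⟨v, hv⟩ : ∃ v, v ∉ D' ∪ S' := by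
        by_contra hcon
        push_neg at hcon
        exact hne (Finset.eq_univ_iff_forall.mpr hcon)
      rw [Finset.mem_union, not_or] at hv
      exact ih v hv.1 hv.2 hD (Finset.mem_insert_of_mem hS)

lemma badset_empty_eq (t : ℕ) : badset t (∅ : Finset (MBWVert t)) = Finset.univ := by
  ext i; simp [mem_badset]

lemma card_badset_empty (t : ℕ) : (badset t (∅ : Finset (MBWVert t))).card = t := by
  rw [badset_empty_eq]
  simp

lemma no_dominates_empty {t : ℕ} : ¬ Dominates (Gg t) ∅ (∅ : Finset (MBWVert t)) := by
  intro h
  obtain ⟨u, hu, -⟩ := h none (Set.notMem_empty _)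
  exact Finset.notMem_empty u hu

/-- Staller needs her first move to be the centre; then Dominator needs `t` moves. -/
lemma sgame_lower {t : ℕ} {m : ℕ} (h : MBWin (Gg t) ∅ false m ∅ ∅) : t ≤ m := by
  cases h with
  | win _ _ _ _ hdom => exact absurd hdom no_dominates_empty
  | smove _ _ _ hne h =>
      have := lowkey (h none (Finset.notMem_empty _) (Finset.notMem_empty _))
        (Finset.notMem_empty _) (Finset.mem_insert_self _ _)
      rwa [card_badset_empty] at this

lemma dgame_not_zero {t : ℕ} : ¬ MBWin (Gg t) ∅ true 0 ∅ ∅ := by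
  intro h
  cases h with
  | win _ _ _ _ hdom => exact no_dominates_empty hdom

lemma dgame_one {t : ℕ} : MBWin (Gg t) ∅ true 1 ∅ ∅ := by
  refine MBWin.dmove 0 _ _ none (Finset.notMem_empty _) (Finset.notMem_empty _) ?_
  refine MBWin.win _ _ _ _ ?_
  intro v _
  refine ⟨none, Finset.mem_insert_self _ _, ?_⟩
  rcases v with _ | a
  · exact Or.inl rfl
  · exact Or.inr (adj_none a)

lemma sgame_t {t : ℕ} (ht : 1 ≤ t) : MBWin (Gg t) ∅ false t ∅ ∅ := by
  apply (ABkey ht t).1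
  · rw [card_badset_empty]
  · intro i _ x
    exact Finset.notMem_empty _

/-- sInf of a coerced set of naturals. -/
lemma sInf_image_eq_s6 {S : Set ℕ} {a : ℕ} (ha : a ∈ S) (hmin : ∀ m ∈ S, a ≤ m) :
    sInf ((fun m : ℕ => (m : ℕ∞)) '' S) = (a : ℕ∞) := by
  apply le_antisymm
  · exact sInf_le ⟨a, ha, rfl⟩
  · apply le_sInf
    rintro x ⟨m, hm, rfl⟩
    simpa using (Nat.cast_le (α := ℕ∞)).mpr (hmin m hm)

lemma dom_singleton_none {t : ℕ} : Dominates (Gg t) ∅ ({none} : Finset (MBWVert t)) := by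
  intro v _
  refine ⟨none, Finset.mem_singleton_self _, ?_⟩
  rcases v with _ | a
  · exact Or.inl rfl
  · exact Or.inr (adj_none a)


/-- For every integer `t ≥ 1`, there exists a finite simple graph `G` with `γ(G) = 1`,
`γ_MB(G) = 1`, and `γ_MB'(G) = t`. -/
theorem realization_gammaMB'_with_gamma_eq_one (t : ℕ) (ht : 1 ≤ t) :
    ∃ (W : Type) (iF : Fintype W) (iD : DecidableEq W) (G : SimpleGraph W),
      @dominationNumber W iF G = 1 ∧
      @gammaMB W iF iD G = 1 ∧
      @gammaMB' W iF iD G = (t : ℕ∞) := by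
  refine ⟨MBWVert t, inferInstance, inferInstance, Gg t, ?_, ?_, ?_⟩
  · -- domination number
    unfold dominationNumber
    apply le_antisymm
    · exact Nat.sInf_le ⟨{none}, dom_singleton_none, rfl⟩
    · rw [Nat.one_le_iff_ne_zero, Ne, Nat.sInf_eq_zero, not_or]
      constructor
      · rintro ⟨D, hdom, hcard⟩
        rw [Finset.card_eq_zero] at hcard
        subst hcard
        exact no_dominates_empty hdom
      · rw [Set.eq_empty_iff_forall_notMem]
        push_neg
        exact ⟨1, {none}, dom_singleton_none, rfl⟩
  · -- gammaMB
    show sInf _ = (1 : ℕ∞)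
    rw [show (1 : ℕ∞) = ((1 : ℕ) : ℕ∞) by rfl]
    apply sInf_image_eq_s6 (S := {m : ℕ | MBWin (Gg t) ∅ true m ∅ ∅}) dgame_one
    intro m hm
    rcases Nat.eq_zero_or_pos m with rfl | h
    · exact absurd hm dgame_not_zero
    · exact h
  · -- gammaMB'
    show sInf _ = (t : ℕ∞)
    exact sInf_image_eq_s6 (S := {m : ℕ | MBWin (Gg t) ∅ false m ∅ ∅}) (sgame_t ht)
      (fun m hm => sgame_lower hm)
end

section
/- Let G be a finite simple graph with γ(G) = 2. Then γ_MB(G) = γ(G) = 2 if and only if G has a vertex that lies in at least two γ-sets of G. -/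
variable {V : Type*}

lemma dominates_mono {G : SimpleGraph V} {A : Set V} {D D' : Finset V}
    (hDD : D ⊆ D') (h : Dominates G A D) : Dominates G A D' := by
  intro v hv
  obtain ⟨u, hu, h2⟩ := h v hv
  exact ⟨u, hDD hu, h2⟩

lemma two_le_card_of_dominates [Fintype V] {G : SimpleGraph V}
    (h : dominationNumber G = 2) {D : Finset V} (hD : Dominates G ∅ D) : 2 ≤ D.card := by
  have h2 : dominationNumber G ≤ D.card :=
    Nat.sInf_le (by exact ⟨D, hD, rfl⟩)
  omega

lemma mbwin_true_zero [Fintype V] [DecidableEq V] {G : SimpleGraph V} {A : Set V}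
    {D S : Finset V} (h : MBWin G A true 0 D S) : Dominates G A D := by
  cases h with
  | win _ _ _ _ hd => exact hd

lemma mbwin_false_zero [Fintype V] [DecidableEq V] {G : SimpleGraph V} {A : Set V}
    {D S : Finset V} (h : MBWin G A false 0 D S) : Dominates G A D := by
  cases h with
  | win _ _ _ _ hd => exact hd
  | smove _ _ _ hne hall =>
    obtain ⟨u, hu⟩ : ∃ u, u ∉ D ∪ S := by
      by_contra hc
      push_neg at hc
      exact hne (Finset.eq_univ_iff_forall.mpr hc)
    simp only [Finset.mem_union, not_or] at hu
    exact mbwin_true_zero (hall u hu.1 hu.2)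

lemma mbwin_true_one [Fintype V] [DecidableEq V] {G : SimpleGraph V} {A : Set V}
    {D S : Finset V} (h : MBWin G A true 1 D S) :
    Dominates G A D ∨ ∃ w, w ∉ D ∧ w ∉ S ∧ Dominates G A (insert w D) := by
  cases h with
  | win _ _ _ _ hd => exact Or.inl hd
  | dmove _ _ _ w hw1 hw2 hw3 => exact Or.inr ⟨w, hw1, hw2, mbwin_false_zero hw3⟩

/-- Let `G` be a finite simple graph with `γ(G) = 2`.  Then `γ_MB(G) = γ(G) = 2` if and
only if `G` has a vertex that lies in at least two `γ`-sets of `G`. -/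
theorem gammaMB_eq_two_iff [Fintype V] [DecidableEq V] (G : SimpleGraph V)
    (h : dominationNumber G = 2) :
    gammaMB G = 2 ↔
      ∃ (v : V) (D₁ D₂ : Finset V), D₁ ≠ D₂ ∧ IsGammaSet G D₁ ∧ IsGammaSet G D₂ ∧
        v ∈ D₁ ∧ v ∈ D₂ := by
  -- basic consequences of `dominationNumber G = 2`
  have n0 : ¬ Dominates G ∅ (∅ : Finset V) := fun hd => by
    have := two_le_card_of_dominates h hd; simp at this
  have n1 : ∀ w : V, ¬ Dominates G ∅ ({w} : Finset V) := fun w hd => by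
    have := two_le_card_of_dominates h hd; simp at this
  have n1' : ∀ w : V, ¬ Dominates G ∅ (insert w (∅ : Finset V)) := by
    simpa using n1
  have hnot0 : ¬ MBWin G ∅ true 0 ∅ ∅ := fun hw => n0 (mbwin_true_zero hw)
  have hnot1 : ¬ MBWin G ∅ true 1 ∅ ∅ := by
    intro hw
    rcases mbwin_true_one hw with hd | ⟨w, _, _, hd⟩
    · exact n0 hd
    · exact n1' w hd
  constructor
  · intro hg
    -- extract a winning strategy with 2 moves
    have hwin2 : MBWin G ∅ true 2 ∅ ∅ := by
      set T : Set ℕ := {m : ℕ | MBWin G ∅ true m ∅ ∅} with hT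
      have hg' : sInf ((fun m : ℕ => (m : ℕ∞)) '' T) = 2 := hg
      have hTne : T.Nonempty := by
        rcases Set.eq_empty_or_nonempty T with he | hne
        · rw [he] at hg'; simp at hg'
        · exact hne
      have hmem : sInf T ∈ T := Nat.sInf_mem hTne
      have hle : ((sInf T : ℕ) : ℕ∞) ≤ 2 := by
        rw [← hg']
        refine le_sInf ?_
        rintro x ⟨m, hm, rfl⟩
        show ((sInf T : ℕ) : ℕ∞) ≤ (m : ℕ∞)
        exact_mod_cast Nat.sInf_le hm
      have hge : (2 : ℕ∞) ≤ ((sInf T : ℕ) : ℕ∞) := by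
        rw [← hg']
        exact sInf_le ⟨sInf T, hmem, rfl⟩
      have : sInf T = 2 := by
        have := le_antisymm hle hge
        exact_mod_cast this
      rw [← this]; exact hmem
    cases hwin2 with
    | win _ _ _ _ hd => exact absurd hd n0
    | dmove _ _ _ v hv1 hv2 hw =>
      cases hw with
      | win _ _ _ _ hd => exact absurd hd (n1' v)
      | smove _ _ _ hne hall =>
        have key : ∀ s : V, s ≠ v →
            ∃ w, w ≠ v ∧ w ≠ s ∧ Dominates G ∅ (insert w (insert v ∅)) := by
          intro s hs
          have hms := hall s (by simp [hs]) (by simp)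
          rcases mbwin_true_one hms with hd | ⟨w, hw1, hw2, hd⟩
          · exact absurd hd (n1' v)
          · refine ⟨w, by simpa using hw1, by simpa using hw2, hd⟩
        obtain ⟨s₁, hs₁⟩ : ∃ s₁ : V, s₁ ≠ v := by
          by_contra hc
          push_neg at hc
          apply hne
          apply Finset.eq_univ_iff_forall.mpr
          intro x; simp [hc x]
        obtain ⟨w₁, hw₁v, _, hd₁⟩ := key s₁ hs₁
        obtain ⟨w₂, hw₂v, hw₂w₁, hd₂⟩ := key w₁ hw₁v
        refine ⟨v, insert w₁ (insert v ∅), insert w₂ (insert v ∅), ?_, ⟨hd₁, ?_⟩,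
          ⟨hd₂, ?_⟩, by simp, by simp⟩
        · intro he
          have : w₂ ∈ insert w₁ (insert v (∅ : Finset V)) := he ▸ (by simp)
          simp only [Finset.mem_insert, Finset.notMem_empty, or_false] at this
          rcases this with h' | h'
          · exact hw₂w₁ h'
          · exact hw₂v h'
        · rw [h]
          rw [Finset.card_insert_of_notMem (by simp [hw₁v])]
          simp
        · rw [h]
          rw [Finset.card_insert_of_notMem (by simp [hw₂v])]
          simp
  · rintro ⟨v, D₁, D₂, hne, ⟨hdom1, hc1⟩, ⟨hdom2, hc2⟩, hv1, hv2⟩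
    rw [h] at hc1 hc2
    -- extract a ≠ v with D₁ = {v, a}, and b similarly
    obtain ⟨a, ha⟩ : ∃ a, D₁.erase v = {a} :=
      Finset.card_eq_one.mp (by rw [Finset.card_erase_of_mem hv1, hc1])
    obtain ⟨b, hb⟩ : ∃ b, D₂.erase v = {b} :=
      Finset.card_eq_one.mp (by rw [Finset.card_erase_of_mem hv2, hc2])
    have hav : a ≠ v := (Finset.mem_erase.mp (ha ▸ Finset.mem_singleton_self a)).1
    have hbv : b ≠ v := (Finset.mem_erase.mp (hb ▸ Finset.mem_singleton_self b)).1
    have hD1 : D₁ = insert v {a} := by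
      rw [← ha, Finset.insert_erase hv1]
    have hD2 : D₂ = insert v {b} := by
      rw [← hb, Finset.insert_erase hv2]
    have hab : a ≠ b := by
      intro he
      exact hne (by rw [hD1, hD2, he])
    have hda : Dominates G ∅ (insert a (insert v ∅)) := by
      refine dominates_mono ?_ (hD1 ▸ hdom1)
      intro x hx; simp at hx ⊢; tauto
    have hdb : Dominates G ∅ (insert b (insert v ∅)) := by
      refine dominates_mono ?_ (hD2 ▸ hdom2)
      intro x hx; simp at hx ⊢; tauto
    have hwin : MBWin G ∅ true 2 ∅ ∅ := by
      refine MBWin.dmove 1 ∅ ∅ v (by simp) (by simp) ?_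
      refine MBWin.smove 1 _ _ ?_ ?_
      · intro hu
        have : a ∈ insert v ∅ ∪ (∅ : Finset V) := by rw [hu]; exact Finset.mem_univ a
        simp only [Finset.union_empty, Finset.mem_insert, Finset.notMem_empty,
          or_false] at this
        exact hav this
      · intro s hsD hsS
        by_cases hsa : s = a
        · refine MBWin.dmove 0 _ _ b (by simp [hbv]) (by simp [hsa, hab.symm]) ?_
          exact MBWin.win _ _ _ _ hdb
        · refine MBWin.dmove 0 _ _ a (by simp [hav]) (by simp; exact fun h => hsa h.symm) ?_
          exact MBWin.win _ _ _ _ hda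
    -- conclude gammaMB G = 2
    refine le_antisymm ?_ ?_
    · have : gammaMB G ≤ ((2 : ℕ) : ℕ∞) := sInf_le ⟨2, hwin, rfl⟩
      simpa using this
    · refine le_sInf ?_
      rintro x ⟨m, hm, rfl⟩
      have hm2 : 2 ≤ m := by
        rcases Nat.lt_or_ge m 2 with hlt | hge
        · interval_cases m
          · exact absurd hm hnot0
          · exact absurd hm hnot1
        · exact hge
      show (2:ℕ∞) ≤ (m:ℕ∞)
      exact_mod_cast hm2
end

section
/- For every finite simple graph G, the residual graph R(G) is unique up to isomorphism; that is, any two graphs obtained from G by iteratively removing pendant P₂'s until none remains are isomorphic. -/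
variable {V : Type*}

/-- `PendantStep G s t`: the induced subgraph of `G` on `t` is obtained from the induced
subgraph of `G` on `s` by removing a pendant `P₂` (a path `xy` on two vertices attached to
the rest of the graph by exactly one edge, so that `x` is a leaf and `y` has degree `2`),
or by removing the entire remaining graph when it is a single `P₂`. -/
def PendantStep [DecidableEq V] (G : SimpleGraph V) (s t : Finset V) : Prop :=
  (∃ x ∈ s, ∃ y ∈ s, G.Adj x y ∧
      (∀ w ∈ s, G.Adj x w → w = y) ∧
      (∃ z ∈ s, z ≠ x ∧ G.Adj y z ∧ ∀ w ∈ s, G.Adj y w → w = x ∨ w = z) ∧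
      t = (s.erase x).erase y) ∨
  (∃ x ∈ s, ∃ y ∈ s, G.Adj x y ∧ s = {x, y} ∧ t = ∅)

/-- `s` is the vertex set of a residual graph `R(G)` of `G`: it is obtained from the full
vertex set by iteratively removing pendant `P₂`'s until no such removal is possible. -/
def IsResidualSet [Fintype V] [DecidableEq V] (G : SimpleGraph V) (s : Finset V) : Prop :=
  Relation.ReflTransGen (PendantStep G) Finset.univ s ∧ ∀ t, ¬ PendantStep G s t

section Aux
variable [DecidableEq V] {G : SimpleGraph V}

def GoodMap (G : SimpleGraph V) (σ : V ≃ V) (s t : Finset V) : Prop :=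
  s.image σ = t ∧ ∀ u ∈ s, ∀ v ∈ s, G.Adj (σ u) (σ v) ↔ G.Adj u v

lemma confluence {s t₁ t₂ : Finset V} (h₁ : PendantStep G s t₁) (h₂ : PendantStep G s t₂) :
    t₁ = t₂ ∨ (∃ u, PendantStep G t₁ u ∧ PendantStep G t₂ u) ∨
      (∃ σ : V ≃ V, GoodMap G σ t₁ t₂) := by
  rcases h₂ with ⟨x₂, hx₂, y₂, hy₂, hxy₂, hleaf₂, ⟨z₂, hz₂, hzx₂, hyz₂, hdeg₂⟩, rfl⟩ |
    ⟨x₂, hx₂, y₂, hy₂, hxy₂, hs₂, rfl⟩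
  case inr =>
    -- second step is of type B
    rcases h₁ with ⟨x₁, hx₁, y₁, hy₁, hxy₁, hleaf₁, ⟨z₁, hz₁, hzx₁, hyz₁, hdeg₁⟩, rfl⟩ |
      ⟨x₁, hx₁, y₁, hy₁, hxy₁, hs₁, rfl⟩
    · -- type A step from a 2-element set: impossible
      exfalso
      have hsub : ({x₁, y₁, z₁} : Finset V) ⊆ s := by
        intro a ha
        simp only [Finset.mem_insert, Finset.mem_singleton] at ha
        rcases ha with rfl | rfl | rfl <;> assumption
      have hcard : ({x₁, y₁, z₁} : Finset V).card = 3 := by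
        rw [Finset.card_insert_of_notMem (by simp [hxy₁.ne, Ne.symm hzx₁]),
          Finset.card_insert_of_notMem (by simp [hyz₁.ne]), Finset.card_singleton]
      have h3 : 3 ≤ s.card := hcard ▸ Finset.card_le_card hsub
      rw [hs₂] at h3
      have : ({x₂, y₂} : Finset V).card ≤ 2 :=
        (Finset.card_insert_le _ _).trans (by simp)
      omega
    · left; rfl
  -- second step is type A; case on the first
  rcases h₁ with ⟨x₁, hx₁, y₁, hy₁, hxy₁, hleaf₁, ⟨z₁, hz₁, hzx₁, hyz₁, hdeg₁⟩, rfl⟩ |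
    ⟨x₁, hx₁, y₁, hy₁, hxy₁, hs₁, rfl⟩
  swap
  · exfalso
    have hsub : ({x₂, y₂, z₂} : Finset V) ⊆ s := by
      intro a ha
      simp only [Finset.mem_insert, Finset.mem_singleton] at ha
      rcases ha with rfl | rfl | rfl <;> assumption
    have hcard : ({x₂, y₂, z₂} : Finset V).card = 3 := by
      rw [Finset.card_insert_of_notMem (by simp [hxy₂.ne, Ne.symm hzx₂]),
        Finset.card_insert_of_notMem (by simp [hyz₂.ne]), Finset.card_singleton]
    have h3 : 3 ≤ s.card := hcard ▸ Finset.card_le_card hsub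
    rw [hs₁] at h3
    have : ({x₁, y₁} : Finset V).card ≤ 2 :=
      (Finset.card_insert_le _ _).trans (by simp)
    omega
  -- both type A
  by_cases hxx : x₁ = x₂
  · left
    have hy : y₂ = y₁ := hleaf₁ y₂ hy₂ (hxx ▸ hxy₂)
    rw [hxx, hy]
  have hx1y2 : x₁ ≠ y₂ := by
    rintro rfl
    have h1 : x₂ = y₁ := hleaf₁ x₂ hx₂ hxy₂.symm
    have h2 : z₂ = y₁ := hleaf₁ z₂ hz₂ hyz₂
    exact hzx₂ (h2.trans h1.symm)
  have hx2y1 : x₂ ≠ y₁ := by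
    rintro rfl
    exact hx1y2 (hleaf₂ x₁ hx₁ hxy₁.symm)
  have hxx2 : x₂ ≠ x₁ := fun h => hxx h.symm
  have hy2x1 : y₂ ≠ x₁ := Ne.symm hx1y2
  have hy1x2 : y₁ ≠ x₂ := Ne.symm hx2y1
  by_cases hyy : y₁ = y₂
  · -- P₃ case: common support with two leaves x₁, x₂
    have hleaf₂' : ∀ w ∈ s, G.Adj x₂ w → w = y₁ := by
      intro w hw h; rw [hyy]; exact hleaf₂ w hw h
    have hxy₂' : G.Adj x₂ y₁ := hyy ▸ hxy₂
    right; right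
    refine ⟨Equiv.swap x₁ x₂, ?_, ?_⟩
    · rw [← hyy]
      ext a
      rw [Finset.mem_image]
      constructor
      · rintro ⟨b, hb, rfl⟩
        simp only [Finset.mem_erase] at hb ⊢
        obtain ⟨hby, hbx, hbs⟩ := hb
        by_cases hb2 : b = x₂
        · rw [hb2, Equiv.swap_apply_right]
          exact ⟨hxy₁.ne, hxx, hx₁⟩
        · rw [Equiv.swap_apply_of_ne_of_ne hbx hb2]
          exact ⟨hby, hb2, hbs⟩
      · intro ha
        simp only [Finset.mem_erase] at ha
        obtain ⟨hay, hax, has⟩ := ha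
        by_cases ha1 : a = x₁
        · refine ⟨x₂, ?_, ?_⟩
          · simp only [Finset.mem_erase]
            exact ⟨hx2y1, hxx2, hx₂⟩
          · rw [ha1]; exact Equiv.swap_apply_right _ _
        · refine ⟨a, ?_, Equiv.swap_apply_of_ne_of_ne ha1 hax⟩
          simp only [Finset.mem_erase]
          exact ⟨hay, ha1, has⟩
    · intro u hu v hv
      simp only [Finset.mem_erase] at hu hv
      obtain ⟨huy, hux, hus⟩ := hu
      obtain ⟨hvy, hvx, hvs⟩ := hv
      by_cases hu2 : u = x₂ <;> by_cases hv2 : v = x₂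
      · rw [hu2, hv2, Equiv.swap_apply_right]; simp
      · rw [hu2, Equiv.swap_apply_right, Equiv.swap_apply_of_ne_of_ne hvx hv2]
        constructor
        · intro h; exact absurd (hleaf₁ v hvs h) hvy
        · intro h; exact absurd (hleaf₂' v hvs h) hvy
      · rw [hv2, Equiv.swap_apply_right, Equiv.swap_apply_of_ne_of_ne hux hu2]
        constructor
        · intro h; exact absurd (hleaf₁ u hus h.symm) huy
        · intro h; exact absurd (hleaf₂' u hus h.symm) huy
      · rw [Equiv.swap_apply_of_ne_of_ne hux hu2,
          Equiv.swap_apply_of_ne_of_ne hvx hv2]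
  -- now x₁, y₁, x₂, y₂ are pairwise distinct
  have hyy2 : y₂ ≠ y₁ := fun h => hyy h.symm
  have hz1x2 : z₁ ≠ x₂ := by
    rintro rfl
    exact hyy (hleaf₂ y₁ hy₁ hyz₁.symm)
  have hz2x1 : z₂ ≠ x₁ := by
    rintro rfl
    exact hyy2 (hleaf₁ y₂ hy₂ hyz₂.symm)
  by_cases hzy : z₁ = y₂
  · -- P₄ case: x₁ - y₁ - y₂ - x₂
    have hyz₁' : G.Adj y₁ y₂ := hzy ▸ hyz₁
    have hdeg₁' : ∀ w ∈ s, G.Adj y₁ w → w = x₁ ∨ w = y₂ := by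
      intro w hw h
      rcases hdeg₁ w hw h with h' | h'
      · exact Or.inl h'
      · exact Or.inr (h'.trans hzy)
    have hz2 : z₂ = y₁ := by
      rcases hdeg₂ y₁ hy₁ hyz₁'.symm with h | h
      · exact absurd h.symm hx2y1
      · exact h.symm
    have hdeg₂' : ∀ w ∈ s, G.Adj y₂ w → w = x₂ ∨ w = y₁ := by
      intro w hw h
      rcases hdeg₂ w hw h with h' | h'
      · exact Or.inl h'
      · exact Or.inr (h'.trans hz2)
    right; right
    set σ : V ≃ V := (Equiv.swap x₁ x₂).trans (Equiv.swap y₁ y₂) with hσ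
    have e1 : σ x₂ = x₁ := by
      rw [hσ, Equiv.trans_apply, Equiv.swap_apply_right,
        Equiv.swap_apply_of_ne_of_ne hxy₁.ne hx1y2]
    have e2 : σ y₂ = y₁ := by
      rw [hσ, Equiv.trans_apply, Equiv.swap_apply_of_ne_of_ne hy2x1 hxy₂.ne',
        Equiv.swap_apply_right]
    have e3 : ∀ a, a ≠ x₁ → a ≠ x₂ → a ≠ y₁ → a ≠ y₂ → σ a = a := by
      intro a h1 h2 h3 h4
      rw [hσ, Equiv.trans_apply, Equiv.swap_apply_of_ne_of_ne h1 h2,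
        Equiv.swap_apply_of_ne_of_ne h3 h4]
    refine ⟨σ, ?_, ?_⟩
    · ext a
      rw [Finset.mem_image]
      constructor
      · rintro ⟨b, hb, rfl⟩
        simp only [Finset.mem_erase] at hb ⊢
        obtain ⟨hby, hbx, hbs⟩ := hb
        by_cases hb2 : b = x₂
        · rw [hb2, e1]; exact ⟨hx1y2, hxx, hx₁⟩
        by_cases hb3 : b = y₂
        · rw [hb3, e2]; exact ⟨hyy, hy1x2, hy₁⟩
        · rw [e3 b hbx hb2 hby hb3]; exact ⟨hb3, hb2, hbs⟩
      · intro ha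
        simp only [Finset.mem_erase] at ha
        obtain ⟨hay, hax, has⟩ := ha
        by_cases ha1 : a = x₁
        · refine ⟨x₂, ?_, ?_⟩
          · simp only [Finset.mem_erase]
            exact ⟨hx2y1, hxx2, hx₂⟩
          · rw [ha1]; exact e1
        by_cases ha2 : a = y₁
        · refine ⟨y₂, ?_, ?_⟩
          · simp only [Finset.mem_erase]
            exact ⟨hyy2, hy2x1, hy₂⟩
          · rw [ha2]; exact e2
        · refine ⟨a, ?_, e3 a ha1 hax ha2 hay⟩
          simp only [Finset.mem_erase]
          exact ⟨ha2, ha1, has⟩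
    · intro u hu v hv
      simp only [Finset.mem_erase] at hu hv
      obtain ⟨huy, hux, hus⟩ := hu
      obtain ⟨hvy, hvx, hvs⟩ := hv
      by_cases hu2 : u = x₂ <;> by_cases hu3 : u = y₂ <;>
        by_cases hv2 : v = x₂ <;> by_cases hv3 : v = y₂
      all_goals try (exact absurd (hu2.symm.trans hu3) hxy₂.ne)
      all_goals try (exact absurd (hv2.symm.trans hv3) hxy₂.ne)
      · -- u = x₂, v = x₂
        rw [hu2, hv2, e1]; simp
      · -- u = x₂, v = y₂
        rw [hu2, hv3, e1, e2]
        simp only [hxy₁, hxy₂, iff_true]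
      · -- u = x₂, v other
        rw [hu2, e1, e3 v hvx hv2 hvy hv3]
        constructor
        · intro h; exact absurd (hleaf₁ v hvs h) hvy
        · intro h; exact absurd (hleaf₂ v hvs h) hv3
      · -- u = y₂, v = x₂
        rw [hu3, hv2, e1, e2]
        simp only [hxy₁.symm, hxy₂.symm, iff_true]
      · -- u = y₂, v = y₂
        rw [hu3, hv3, e2]; simp
      · -- u = y₂, v other
        rw [hu3, e2, e3 v hvx hv2 hvy hv3]
        constructor
        · intro h
          rcases hdeg₁' v hvs h with h' | h'
          · exact absurd h' hvx
          · exact absurd h' hv3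
        · intro h
          rcases hdeg₂' v hvs h with h' | h'
          · exact absurd h' hv2
          · exact absurd h' hvy
      · -- u other, v = x₂
        rw [hv2, e1, e3 u hux hu2 huy hu3]
        constructor
        · intro h; exact absurd (hleaf₁ u hus h.symm) huy
        · intro h; exact absurd (hleaf₂ u hus h.symm) hu3
      · -- u other, v = y₂
        rw [hv3, e2, e3 u hux hu2 huy hu3]
        constructor
        · intro h
          rcases hdeg₁' u hus h.symm with h' | h'
          · exact absurd h' hux
          · exact absurd h' hu3
        · intro h
          rcases hdeg₂' u hus h.symm with h' | h'
          · exact absurd h' hu2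
          · exact absurd h' huy
      · rw [e3 u hux hu2 huy hu3, e3 v hvx hv2 hvy hv3]
  · -- disjoint case: the two removals commute
    have hz2y1 : z₂ ≠ y₁ := by
      rintro rfl
      rcases hdeg₁ y₂ hy₂ hyz₂.symm with h | h
      · exact hx1y2 h.symm
      · exact hzy h.symm
    right; left
    refine ⟨((s.erase x₁).erase y₁).erase x₂ |>.erase y₂, Or.inl ?_, Or.inl ?_⟩
    · refine ⟨x₂, ?_, y₂, ?_, hxy₂, ?_, ⟨z₂, ?_, hzx₂, hyz₂, ?_⟩, rfl⟩
      · simp only [Finset.mem_erase]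
        exact ⟨hx2y1, hxx2, hx₂⟩
      · simp only [Finset.mem_erase]
        exact ⟨hyy2, hy2x1, hy₂⟩
      · intro w hw hadj
        simp only [Finset.mem_erase] at hw
        exact hleaf₂ w hw.2.2 hadj
      · simp only [Finset.mem_erase]
        exact ⟨hz2y1, hz2x1, hz₂⟩
      · intro w hw hadj
        simp only [Finset.mem_erase] at hw
        exact hdeg₂ w hw.2.2 hadj
    · refine ⟨x₁, ?_, y₁, ?_, hxy₁, ?_, ⟨z₁, ?_, hzx₁, hyz₁, ?_⟩, ?_⟩
      · simp only [Finset.mem_erase]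
        exact ⟨hx1y2, hxx, hx₁⟩
      · simp only [Finset.mem_erase]
        exact ⟨hyy, hy1x2, hy₁⟩
      · intro w hw hadj
        simp only [Finset.mem_erase] at hw
        exact hleaf₁ w hw.2.2 hadj
      · simp only [Finset.mem_erase]
        exact ⟨hzy, hz1x2, hz₁⟩
      · intro w hw hadj
        simp only [Finset.mem_erase] at hw
        exact hdeg₁ w hw.2.2 hadj
      · ext a
        simp only [Finset.mem_erase]
        tauto

lemma PendantStep.ssubset' {s t : Finset V} (h : PendantStep G s t) : t ⊂ s := by
  rcases h with ⟨x, hx, y, hy, hadj, hleaf, ⟨z, hz, hzx, hyz, hdeg⟩, rfl⟩ |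
    ⟨x, hx, y, hy, hadj, hs, rfl⟩
  · constructor
    · exact (Finset.erase_subset _ _).trans (Finset.erase_subset _ _)
    · intro hsub
      have := hsub hx
      simp at this
  · exact Finset.empty_ssubset.2 ⟨x, hx⟩

lemma GoodMap.symm {σ : V ≃ V} {s t : Finset V} (h : GoodMap G σ s t) :
    GoodMap G σ.symm t s := by
  obtain ⟨himg, hadj⟩ := h
  constructor
  · rw [← himg, Finset.image_image]
    simp
  · intro u hu v hv
    rw [← himg] at hu hv
    obtain ⟨u₀, hu₀, rfl⟩ := Finset.mem_image.1 hu
    obtain ⟨v₀, hv₀, rfl⟩ := Finset.mem_image.1 hv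
    simpa using (hadj u₀ hu₀ v₀ hv₀).symm

lemma GoodMap.step {σ : V ≃ V} {s s' t : Finset V} (h : GoodMap G σ s s')
    (hst : PendantStep G s t) :
    PendantStep G s' (t.image σ) ∧ GoodMap G σ t (t.image σ) := by
  obtain ⟨himg, hadj⟩ := h
  have hmem : ∀ {a : V}, a ∈ s → σ a ∈ s' := by
    intro a ha; rw [← himg]; exact Finset.mem_image_of_mem _ ha
  have hsub := hst.ssubset'.subset
  refine ⟨?_, rfl, fun u hu v hv => hadj u (hsub hu) v (hsub hv)⟩
  rcases hst with ⟨x, hx, y, hy, hxy, hleaf, ⟨z, hz, hzx, hyz, hdeg⟩, rfl⟩ |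
    ⟨x, hx, y, hy, hxy, rfl, rfl⟩
  · left
    refine ⟨σ x, hmem hx, σ y, hmem hy, (hadj _ hx _ hy).2 hxy, ?_, ⟨σ z, hmem hz,
      fun hc => hzx (σ.injective hc), (hadj _ hy _ hz).2 hyz, ?_⟩, ?_⟩
    · intro w hw haw
      rw [← himg] at hw
      obtain ⟨w₀, hw₀, rfl⟩ := Finset.mem_image.1 hw
      exact congrArg σ (hleaf w₀ hw₀ ((hadj _ hx _ hw₀).1 haw))
    · intro w hw haw
      rw [← himg] at hw
      obtain ⟨w₀, hw₀, rfl⟩ := Finset.mem_image.1 hw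
      rcases hdeg w₀ hw₀ ((hadj _ hy _ hw₀).1 haw) with rfl | rfl
      · exact Or.inl rfl
      · exact Or.inr rfl
    · rw [← himg, Finset.image_erase σ.injective, Finset.image_erase σ.injective]
  · right
    exact ⟨σ x, hmem hx, σ y, hmem hy, (hadj _ hx _ hy).2 hxy, by
      rw [← himg]; simp, by simp⟩

lemma GoodMap.reach {σ : V ≃ V} {s s' r : Finset V} (h : GoodMap G σ s s')
    (hr : Relation.ReflTransGen (PendantStep G) s r) :
    ∃ r', Relation.ReflTransGen (PendantStep G) s' r' ∧ GoodMap G σ r r' := by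
  induction hr with
  | refl => exact ⟨s', .refl, h⟩
  | tail _ hbc ih =>
    obtain ⟨b', hb', hgm⟩ := ih
    obtain ⟨hstep, hgm'⟩ := hgm.step hbc
    exact ⟨_, hb'.tail hstep, hgm'⟩

lemma GoodMap.final {σ : V ≃ V} {r r' : Finset V} (h : GoodMap G σ r r')
    (hf : ∀ t, ¬ PendantStep G r t) : ∀ t, ¬ PendantStep G r' t := by
  intro t ht
  exact hf _ (h.symm.step ht).1

lemma GoodMap.iso {σ : V ≃ V} {s t : Finset V} (h : GoodMap G σ s t) :
    Nonempty ((G.induce (↑s : Set V)) ≃g (G.induce (↑t : Set V))) := by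
  obtain ⟨himg, hadj⟩ := h
  have hiff : ∀ a : V, a ∈ (↑s : Set V) ↔ σ a ∈ (↑t : Set V) := by
    intro a
    simp only [Finset.coe_mem, Set.mem_setOf_eq, Finset.mem_coe]
    constructor
    · intro ha; rw [← himg]; exact Finset.mem_image_of_mem _ ha
    · intro ha; rw [← himg] at ha
      obtain ⟨b, hb, hba⟩ := Finset.mem_image.1 ha
      rwa [← σ.injective hba]
  exact ⟨⟨σ.subtypeEquiv hiff, by
    intro a b
    exact hadj a a.2 b b.2⟩⟩

lemma exists_residual (G : SimpleGraph V) (s : Finset V) :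
    ∃ r, Relation.ReflTransGen (PendantStep G) s r ∧ ∀ t, ¬ PendantStep G r t := by
  induction s using Finset.strongInduction with
  | _ s ih =>
    by_cases h : ∃ t, PendantStep G s t
    · obtain ⟨t, ht⟩ := h
      obtain ⟨r, hr, hf⟩ := ih t ht.ssubset'
      exact ⟨r, .head ht hr, hf⟩
    · exact ⟨s, .refl, fun t ht => h ⟨t, ht⟩⟩

lemma residual_unique_aux (G : SimpleGraph V) (s : Finset V) :
    ∀ r₁ r₂, Relation.ReflTransGen (PendantStep G) s r₁ → (∀ t, ¬ PendantStep G r₁ t) →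
      Relation.ReflTransGen (PendantStep G) s r₂ → (∀ t, ¬ PendantStep G r₂ t) →
      Nonempty ((G.induce (↑r₁ : Set V)) ≃g (G.induce (↑r₂ : Set V))) := by
  induction s using Finset.strongInduction with
  | _ s ih =>
    intro r₁ r₂ h₁ hf₁ h₂ hf₂
    rcases h₁.cases_head with rfl | ⟨t₁, hst₁, ht₁⟩
    · rcases h₂.cases_head with rfl | ⟨t₂, hst₂, _⟩
      · exact ⟨SimpleGraph.Iso.refl⟩
      · exact absurd hst₂ (hf₁ t₂)
    rcases h₂.cases_head with rfl | ⟨t₂, hst₂, ht₂⟩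
    · exact absurd hst₁ (hf₂ t₁)
    rcases confluence hst₁ hst₂ with rfl | ⟨u, hu₁, hu₂⟩ | ⟨σ, hgm⟩
    · exact ih t₁ hst₁.ssubset' r₁ r₂ ht₁ hf₁ ht₂ hf₂
    · obtain ⟨r, hur, hfr⟩ := exists_residual G u
      obtain ⟨i₁⟩ := ih t₁ hst₁.ssubset' r₁ r ht₁ hf₁ (.head hu₁ hur) hfr
      obtain ⟨i₂⟩ := ih t₂ hst₂.ssubset' r₂ r ht₂ hf₂ (.head hu₂ hur) hfr
      exact ⟨i₁.trans i₂.symm⟩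
    · obtain ⟨r₁', hr₁', hgm'⟩ := hgm.reach ht₁
      obtain ⟨i₂⟩ := ih t₂ hst₂.ssubset' r₁' r₂ hr₁' (hgm'.final hf₁) ht₂ hf₂
      obtain ⟨i₁⟩ := hgm'.iso
      exact ⟨i₁.trans i₂⟩
end Aux

/-- For every finite simple graph `G`, the residual graph `R(G)` is unique up to
isomorphism: any two graphs obtained from `G` by iteratively removing pendant `P₂`'s
until none remains are isomorphic. -/
theorem residual_unique [Fintype V] [DecidableEq V] (G : SimpleGraph V)
    (s₁ s₂ : Finset V) (h₁ : IsResidualSet G s₁) (h₂ : IsResidualSet G s₂) :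
    Nonempty ((G.induce (↑s₁ : Set V)) ≃g (G.induce (↑s₂ : Set V))) := by
  exact residual_unique_aux G Finset.univ s₁ s₂ h₁.1 h₁.2 h₂.1 h₂.2
end

section
/- Let G be a finite simple graph and R(G) a residual graph of G. Then the graph G − V(R(G)) (the subgraph of G induced on the vertices removed in passing from G to R(G)) is a forest that has a unique perfect matching. -/
variable {V : Type*}

section CycleLemmas

variable {G : SimpleGraph V}

lemma cycle_two_nbrs_start {u : V} (c : G.Walk u u) (hc : c.IsCycle) :
    ∃ w₁ w₂, w₁ ≠ w₂ ∧ s(u, w₁) ∈ c.edges ∧ s(u, w₂) ∈ c.edges := by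
  obtain ⟨w₁, h₁, q, rfl⟩ := SimpleGraph.Walk.not_nil_iff.mp hc.not_nil
  obtain ⟨w₂, h₂, r, hrev⟩ := SimpleGraph.Walk.exists_eq_cons_of_ne h₁.ne q.reverse
  have he₂ : s(u, w₂) ∈ q.edges := by
    have h' : s(u, w₂) ∈ q.reverse.edges := by rw [hrev]; simp
    rwa [SimpleGraph.Walk.edges_reverse, List.mem_reverse] at h'
  refine ⟨w₁, w₂, ?_, by simp, List.mem_cons_of_mem _ he₂⟩
  rintro rfl
  have hnodup := hc.isCircuit.isTrail.edges_nodup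
  rw [SimpleGraph.Walk.edges_cons] at hnodup
  exact (List.nodup_cons.mp hnodup).1 he₂

lemma cycle_two_nbrs [DecidableEq V] {u v : V} {c : G.Walk v v} (hc : c.IsCycle)
    (hu : u ∈ c.support) :
    ∃ w₁ w₂, w₁ ≠ w₂ ∧ (G.Adj u w₁ ∧ w₁ ∈ c.support) ∧ (G.Adj u w₂ ∧ w₂ ∈ c.support) := by
  obtain ⟨w₁, w₂, hne, he₁, he₂⟩ := cycle_two_nbrs_start (c.rotate u hu) (hc.rotate hu)
  rw [(SimpleGraph.Walk.rotate_edges c u hu).mem_iff] at he₁ he₂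
  exact ⟨w₁, w₂, hne, ⟨c.adj_of_mem_edges he₁, c.snd_mem_support_of_mem_edges he₁⟩,
    ⟨c.adj_of_mem_edges he₂, c.snd_mem_support_of_mem_edges he₂⟩⟩

lemma unique_matching_empty : ∃! M : G.Subgraph, M.verts = (∅ : Set V) ∧ M.IsMatching := by
  refine ⟨⊥, ⟨by simp, fun v hv => by simp at hv⟩, ?_⟩
  rintro M ⟨hv, -⟩
  have hA : ∀ u w, ¬ M.Adj u w := fun u w h => by simpa [hv] using h.fst_mem
  apply SimpleGraph.Subgraph.ext
  · simp [hv]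
  · funext u w
    simp [hA u w]

/-- Key extension lemma: adding a pendant pair `x, y` to `T` preserves acyclicity
and unique matching. -/
lemma key_step [DecidableEq V] (D T : Set V) (x y : V) (hadj : G.Adj x y)
    (hD : ∀ u, u ∈ D ↔ u ∈ T ∨ u = x ∨ u = y) (hxT : x ∉ T) (hyT : y ∉ T)
    (hxleaf : ∀ w ∈ D, G.Adj x w → w = y)
    (hydeg : ∃ z, ∀ w ∈ D, G.Adj y w → w = x ∨ w = z)
    (ihA : ∀ (v : V) (c : G.Walk v v), c.IsCycle → ¬ ∀ u ∈ c.support, u ∈ T)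
    (ihM : ∃! M : G.Subgraph, M.verts = T ∧ M.IsMatching) :
    (∀ (v : V) (c : G.Walk v v), c.IsCycle → ¬ ∀ u ∈ c.support, u ∈ D) ∧
    (∃! M : G.Subgraph, M.verts = D ∧ M.IsMatching) := by
  obtain ⟨z, hz⟩ := hydeg
  have hxD : x ∈ D := (hD x).mpr (Or.inr (Or.inl rfl))
  have hyD : y ∈ D := (hD y).mpr (Or.inr (Or.inr rfl))
  constructor
  · -- acyclicity
    intro v c hc hsupp
    have hxs : x ∉ c.support := by
      intro hx
      obtain ⟨w₁, w₂, hne, ⟨ha₁, hs₁⟩, ⟨ha₂, hs₂⟩⟩ := cycle_two_nbrs hc hx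
      have e₁ := hxleaf w₁ (hsupp w₁ hs₁) ha₁
      have e₂ := hxleaf w₂ (hsupp w₂ hs₂) ha₂
      exact hne (e₁.trans e₂.symm)
    have hys : y ∉ c.support := by
      intro hy
      obtain ⟨w₁, w₂, hne, ⟨ha₁, hs₁⟩, ⟨ha₂, hs₂⟩⟩ := cycle_two_nbrs hc hy
      have e₁ := hz w₁ (hsupp w₁ hs₁) ha₁
      have e₂ := hz w₂ (hsupp w₂ hs₂) ha₂
      rcases e₁ with e₁ | e₁
      · exact hxs (e₁ ▸ hs₁)
      rcases e₂ with e₂ | e₂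
      · exact hxs (e₂ ▸ hs₂)
      · exact hne (e₁.trans e₂.symm)
    refine ihA v c hc fun u hu => ?_
    rcases (hD u).mp (hsupp u hu) with h | h | h
    · exact h
    · exact absurd (h ▸ hu) hxs
    · exact absurd (h ▸ hu) hys
  · -- unique matching
    obtain ⟨MT, ⟨hMTv, hMTm⟩, hMTu⟩ := ihM
    have hxy : x ≠ y := hadj.ne
    set MA := MT ⊔ G.subgraphOfAdj hadj with hMA
    have hMAadj : ∀ u w, MA.Adj u w ↔ MT.Adj u w ∨ (u = x ∧ w = y) ∨ (u = y ∧ w = x) := by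
      intro u w
      rw [hMA]
      simp only [SimpleGraph.Subgraph.sup_adj, SimpleGraph.subgraphOfAdj_adj]
      constructor
      · rintro (h | h)
        · exact Or.inl h
        · rw [Sym2.eq_iff] at h
          rcases h with ⟨h1, h2⟩ | ⟨h1, h2⟩
          · exact Or.inr (Or.inl ⟨h1.symm, h2.symm⟩)
          · exact Or.inr (Or.inr ⟨h2.symm, h1.symm⟩)
      · rintro (h | ⟨h1, h2⟩ | ⟨h1, h2⟩)
        · exact Or.inl h
        · exact Or.inr (by rw [h1, h2])
        · exact Or.inr (by rw [h1, h2, Sym2.eq_swap])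
    have hMAv : MA.verts = D := by
      ext u
      simp only [hMA, SimpleGraph.Subgraph.verts_sup, SimpleGraph.subgraphOfAdj_verts,
        Set.mem_union, Set.mem_insert_iff, Set.mem_singleton_iff, hMTv, hD]
    have hMTnx : ∀ u w, MT.Adj u w → u ≠ x ∧ u ≠ y := by
      intro u w h
      have h2 := hMTv ▸ h.fst_mem
      exact ⟨fun e => hxT (e ▸ h2), fun e => hyT (e ▸ h2)⟩
    have hMAm : MA.IsMatching := by
      intro v hv
      rcases (hD v).mp (hMAv ▸ hv) with hvT | hvx | hvy
      · obtain ⟨w, hw, hwu⟩ := hMTm (hMTv ▸ hvT : v ∈ MT.verts)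
        refine ⟨w, (hMAadj v w).mpr (Or.inl hw), fun u hu => ?_⟩
        rcases (hMAadj v u).mp hu with h | ⟨hvx, rfl⟩ | ⟨hvy, rfl⟩
        · exact hwu u h
        · exact absurd (hvx ▸ hvT) hxT
        · exact absurd (hvy ▸ hvT) hyT
      · rw [hvx]
        refine ⟨y, (hMAadj x y).mpr (Or.inr (Or.inl ⟨rfl, rfl⟩)), fun u hu => ?_⟩
        rcases (hMAadj x u).mp hu with h | ⟨-, rfl⟩ | ⟨exy, rfl⟩
        · exact absurd rfl (hMTnx x u h).1
        · rfl
        · exact absurd exy hxy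
      · rw [hvy]
        refine ⟨x, (hMAadj y x).mpr (Or.inr (Or.inr ⟨rfl, rfl⟩)), fun u hu => ?_⟩
        rcases (hMAadj y u).mp hu with h | ⟨eyx, rfl⟩ | ⟨-, rfl⟩
        · exact absurd rfl (hMTnx y u h).2
        · exact absurd eyx hxy.symm
        · rfl
    refine ⟨MA, ⟨hMAv, hMAm⟩, ?_⟩
    rintro M' ⟨hM'v, hM'm⟩
    obtain ⟨w, hw, hwu⟩ := hM'm (hM'v ▸ hxD : x ∈ M'.verts)
    have hwy : w = y := hxleaf w (hM'v ▸ hw.snd_mem) hw.adj_sub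
    rw [hwy] at hw hwu
    have hxpart : ∀ u, M'.Adj x u → u = y := fun u hu => hwu u hu
    obtain ⟨w', hw', hw'u⟩ := hM'm (hM'v ▸ hyD : y ∈ M'.verts)
    have hw'x : w' = x := (hw'u x hw.symm).symm
    rw [hw'x] at hw' hw'u
    have hypart : ∀ u, M'.Adj y u → u = x := fun u hu => hw'u u hu
    set M'' : G.Subgraph :=
      { verts := T
        Adj := fun u v => M'.Adj u v ∧ u ∈ T ∧ v ∈ T
        adj_sub := fun h => M'.adj_sub h.1
        edge_vert := fun h => h.2.1
        symm := ⟨fun u v h => ⟨h.1.symm, h.2.2, h.2.1⟩⟩ } with hM''def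
    have hne_xyT : ∀ u ∈ T, u ≠ x ∧ u ≠ y := by
      intro u hu
      exact ⟨fun e => hxT (e ▸ hu), fun e => hyT (e ▸ hu)⟩
    have hM''m : M''.IsMatching := by
      intro v hv
      have hvT : v ∈ T := hv
      obtain ⟨w, hw, hwu⟩ := hM'm (hM'v ▸ (hD v).mpr (Or.inl hvT) : v ∈ M'.verts)
      have hwT : w ∈ T := by
        rcases (hD w).mp (hM'v ▸ hw.snd_mem) with h | hwx | hwyy
        · exact h
        · rw [hwx] at hw
          exact absurd (hxpart v hw.symm) (hne_xyT v hvT).2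
        · rw [hwyy] at hw
          exact absurd (hypart v hw.symm) (hne_xyT v hvT).1
      exact ⟨w, ⟨hw, hvT, hwT⟩, fun u hu => hwu u hu.1⟩
    have hM''eq : M'' = MT := hMTu M'' ⟨rfl, hM''m⟩
    have hadjiff : ∀ u v, M'.Adj u v ↔ MA.Adj u v := by
      intro u v
      constructor
      · intro h
        by_cases hux : u = x
        · rw [hux] at h ⊢
          exact (hMAadj x v).mpr (Or.inr (Or.inl ⟨rfl, hxpart v h⟩))
        by_cases huy : u = y
        · rw [huy] at h ⊢
          exact (hMAadj y v).mpr (Or.inr (Or.inr ⟨rfl, hypart v h⟩))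
        by_cases hvx : v = x
        · rw [hvx] at h
          exact absurd (hxpart u h.symm) huy
        by_cases hvy : v = y
        · rw [hvy] at h
          exact absurd (hypart u h.symm) hux
        have huT : u ∈ T := by
          rcases (hD u).mp (hM'v ▸ h.fst_mem) with h' | h' | h'
          · exact h'
          · exact absurd h' hux
          · exact absurd h' huy
        have hvT : v ∈ T := by
          rcases (hD v).mp (hM'v ▸ h.snd_mem) with h' | h' | h'
          · exact h'
          · exact absurd h' hvx
          · exact absurd h' hvy
        have hM''a : M''.Adj u v := ⟨h, huT, hvT⟩
        rw [hM''eq] at hM''a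
        exact (hMAadj u v).mpr (Or.inl hM''a)
      · intro h
        rcases (hMAadj u v).mp h with h' | ⟨hux, hvy⟩ | ⟨huy, hvx⟩
        · rw [← hM''eq] at h'
          exact h'.1
        · rw [hux, hvy]; exact hw
        · rw [huy, hvx]; exact hw.symm
    apply SimpleGraph.Subgraph.ext
    · rw [hM'v, hMAv]
    · funext u v
      simpa using hadjiff u v

end CycleLemmas

section Chain

variable [DecidableEq V] {G : SimpleGraph V}

lemma PendantStep.subset {a t : Finset V} (h : PendantStep G a t) : t ⊆ a := by
  rcases h with ⟨x, hx, y, hy, -, -, -, rfl⟩ | ⟨x, hx, y, hy, -, -, rfl⟩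
  · exact (Finset.erase_subset _ _).trans (Finset.erase_subset _ _)
  · exact Finset.empty_subset _

lemma chain_subset {a s : Finset V} (h : Relation.ReflTransGen (PendantStep G) a s) :
    s ⊆ a := by
  induction h with
  | refl => exact Finset.Subset.refl _
  | tail _ hstep ih => exact (PendantStep.subset hstep).trans ih

lemma chain_empty {s : Finset V} (h : Relation.ReflTransGen (PendantStep G) ∅ s) : s = ∅ := by
  rcases Relation.ReflTransGen.cases_head h with h' | ⟨c, hc, -⟩
  · exact h'.symm
  · rcases hc with ⟨x, hx, -⟩ | ⟨x, hx, -⟩ <;> simp at hx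

lemma pendant_chain {a s : Finset V} (h : Relation.ReflTransGen (PendantStep G) a s) :
    (∀ (v : V) (c : G.Walk v v), c.IsCycle → ¬ ∀ u ∈ c.support, u ∈ (↑a \ ↑s : Set V)) ∧
    (∃! M : G.Subgraph, M.verts = (↑a \ ↑s : Set V) ∧ M.IsMatching) := by
  induction h using Relation.ReflTransGen.head_induction_on with
  | refl =>
    have hset : ((↑s : Set V) \ ↑s) = ∅ := by simp
    rw [hset]
    constructor
    · intro v c hc hsupp
      exact hsupp v c.start_mem_support
    · exact unique_matching_empty
  | @head a' c' hstep hchain ih =>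
    rcases hstep with ⟨x, hxa, y, hya, hadj, hxleaf, ⟨z, hza, hzx, hyz, hydeg⟩, ht⟩ |
      ⟨x, hxa, y, hya, hadj, hax, ht⟩
    · subst ht
      have hss : s ⊆ (a'.erase x).erase y := chain_subset hchain
      have hxt : x ∉ (a'.erase x).erase y := by simp
      have hyt : y ∉ (a'.erase x).erase y := by simp
      have hxs : x ∉ s := fun h => hxt (hss h)
      have hys : y ∉ s := fun h => hyt (hss h)
      refine key_step _ ((↑((a'.erase x).erase y) : Set V) \ ↑s) x y hadj ?_ ?_ ?_ ?_ ?_ ih.1 ih.2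
      · intro u
        simp only [Set.mem_diff, Finset.mem_coe, Finset.mem_erase]
        constructor
        · rintro ⟨hua, hus⟩
          by_cases hx' : u = x
          · exact Or.inr (Or.inl hx')
          by_cases hy' : u = y
          · exact Or.inr (Or.inr hy')
          · exact Or.inl ⟨⟨hy', hx', hua⟩, hus⟩
        · rintro (⟨⟨-, -, hua⟩, hus⟩ | h | h)
          · exact ⟨hua, hus⟩
          · exact ⟨h.symm ▸ hxa, h.symm ▸ hxs⟩
          · exact ⟨h.symm ▸ hya, h.symm ▸ hys⟩
      · exact fun h => hxt (Finset.mem_coe.mp h.1)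
      · exact fun h => hyt (Finset.mem_coe.mp h.1)
      · exact fun w hw haw => hxleaf w (Finset.mem_coe.mp hw.1) haw
      · exact ⟨z, fun w hw haw => hydeg w (Finset.mem_coe.mp hw.1) haw⟩
    · subst ht
      subst hax
      have hs0 : s = ∅ := chain_empty hchain
      subst hs0
      refine key_step _ (∅ : Set V) x y hadj ?_ (Set.notMem_empty x) (Set.notMem_empty y)
        ?_ ?_ ?_ unique_matching_empty
      · intro u
        simp
      · intro w hw haw
        have hw' : w = x ∨ w = y := by simpa using hw
        rcases hw' with h | h
        · exact absurd (h ▸ haw) (G.loopless.irrefl x)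
        · exact h
      · refine ⟨x, fun w hw haw => ?_⟩
        have hw' : w = x ∨ w = y := by simpa using hw
        rcases hw' with h | h
        · exact Or.inl h
        · exact absurd (h ▸ haw) (G.loopless.irrefl y)
      · intro v c hc hsupp
        exact hsupp v c.start_mem_support

end Chain

/-- Let `G` be a finite simple graph and `R(G)` a residual graph of `G`.  Then
`G - V(R(G))`, the subgraph of `G` induced on the vertices removed in passing from `G` to
`R(G)`, is a forest that has a unique perfect matching. -/
theorem removed_part_is_forest_with_unique_perfect_matching [Fintype V] [DecidableEq V]
    (G : SimpleGraph V) (s : Finset V) (hs : IsResidualSet G s) :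
    (G.induce ((↑s : Set V)ᶜ)).IsAcyclic ∧
    ∃! M : (G.induce ((↑s : Set V)ᶜ)).Subgraph, M.IsPerfectMatching := by
  obtain ⟨hacyc, hmatch⟩ := pendant_chain hs.1
  have hset : ((↑s : Set V))ᶜ = (↑(Finset.univ : Finset V) : Set V) \ ↑s := by
    simp [Set.compl_eq_univ_diff]
  rw [hset]
  set D : Set V := (↑(Finset.univ : Finset V) : Set V) \ ↑s with hDdef
  constructor
  · -- acyclicity
    intro v c hc
    refine hacyc ↑v (c.map (SimpleGraph.Embedding.induce D).toHom)
      ((SimpleGraph.Walk.map_isCycle_iff_of_injective Subtype.val_injective).mpr hc)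
      fun u hu => ?_
    have hu := (SimpleGraph.Walk.support_map (SimpleGraph.Embedding.induce D).toHom c) ▸ hu
    obtain ⟨b, -, rfl⟩ := List.mem_map.mp hu
    exact b.2
  · -- unique perfect matching
    obtain ⟨M₀, ⟨hM₀v, hM₀m⟩, hM₀u⟩ := hmatch
    refine ⟨{ verts := Set.univ
              Adj := fun a b => M₀.Adj ↑a ↑b
              adj_sub := fun h => M₀.adj_sub h
              edge_vert := fun _ => Set.mem_univ _
              symm := ⟨fun a b h => M₀.symm.symm _ _ h⟩ }, ⟨?_, fun v => Set.mem_univ v⟩, ?_⟩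
    · -- it is a matching
      rintro v -
      obtain ⟨w, hw, hwu⟩ := hM₀m (show (↑v : V) ∈ M₀.verts from hM₀v.symm ▸ v.2)
      exact ⟨⟨w, hM₀v ▸ hw.snd_mem⟩, hw, fun u hu => Subtype.ext (hwu ↑u hu)⟩
    · -- uniqueness
      rintro M' hM'
      set FM : G.Subgraph :=
        { verts := D
          Adj := fun u v => ∃ (hu : u ∈ D) (hv : v ∈ D), M'.Adj ⟨u, hu⟩ ⟨v, hv⟩
          adj_sub := fun ⟨_, _, h⟩ => M'.adj_sub h
          edge_vert := fun ⟨hu, _, _⟩ => hu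
          symm := ⟨fun u v ⟨hu, hv, h⟩ => ⟨hv, hu, M'.symm.symm _ _ h⟩⟩ } with hFMdef
      have hFMm : FM.IsMatching := by
        intro u hu
        obtain ⟨w, hw, hwu⟩ := hM'.1 (hM'.2 ⟨u, hu⟩)
        refine ⟨↑w, ⟨hu, w.2, hw⟩, ?_⟩
        rintro v ⟨hu', hv, h⟩
        exact congrArg Subtype.val (hwu ⟨v, hv⟩ h)
      have hFeq : FM = M₀ := hM₀u FM ⟨rfl, hFMm⟩
      apply SimpleGraph.Subgraph.ext
      · exact Set.eq_univ_iff_forall.mpr hM'.2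
      · funext a b
        apply propext
        constructor
        · intro h
          have h' : FM.Adj ↑a ↑b := ⟨a.2, b.2, h⟩
          rw [hFeq] at h'
          exact h'
        · intro h
          have h' : FM.Adj ↑a ↑b := hFeq ▸ h
          obtain ⟨hu, hv, h''⟩ := h'
          exact h''
end

section
/- Let G be a finite simple graph and R(G) a residual graph of G. Then G has a perfect matching if and only if R(G) has a perfect matching. -/
variable {V : Type*}

/-- Auxiliary predicate: there is a matching of `G` whose vertex set is exactly `s`. -/
def Pm [DecidableEq V] (G : SimpleGraph V) (s : Finset V) : Prop :=
  ∃ M : G.Subgraph, M.verts = (↑s : Set V) ∧ M.IsMatching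

lemma pm_iff_induce [DecidableEq V] (G : SimpleGraph V) (s : Finset V) :
    Pm G s ↔ ∃ M : (G.induce (↑s : Set V)).Subgraph, M.IsPerfectMatching := by
  constructor
  · rintro ⟨M, hverts, hM⟩
    refine ⟨⟨Set.univ, fun a b => M.Adj a.1 b.1, fun {a b} hab => hab.adj_sub,
      fun {a b} _ => Set.mem_univ a, ⟨by intro a b hab; exact hab.symm⟩⟩,
      ?_, fun a => Set.mem_univ a⟩
    intro a _
    have ha : (a : V) ∈ M.verts := by rw [hverts]; exact a.2
    obtain ⟨b, hb, hub⟩ := hM ha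
    have hbmem : b ∈ M.verts := M.edge_vert hb.symm
    rw [hverts] at hbmem
    refine ⟨⟨b, hbmem⟩, hb, ?_⟩
    intro c hc
    exact Subtype.ext (hub c.1 hc)
  · rintro ⟨M, hM, hsp⟩
    refine ⟨⟨(↑s : Set V),
      fun a b => ∃ (ha : a ∈ (↑s : Set V)) (hb : b ∈ (↑s : Set V)), M.Adj ⟨a, ha⟩ ⟨b, hb⟩,
      ?_, ?_, ?_⟩, rfl, ?_⟩
    · rintro a b ⟨ha, hb, hab⟩
      exact hab.adj_sub
    · rintro a b ⟨ha, hb, hab⟩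
      exact ha
    · constructor
      rintro a b ⟨ha, hb, hab⟩
      exact ⟨hb, ha, hab.symm⟩
    · intro a ha
      obtain ⟨b, hb, hub⟩ := hM (hsp ⟨a, ha⟩)
      refine ⟨b.1, ⟨ha, b.2, hb⟩, ?_⟩
      rintro c ⟨hc1, hc2, hc3⟩
      exact congrArg Subtype.val (hub ⟨c, hc2⟩ hc3)

lemma pm_step [DecidableEq V] {G : SimpleGraph V} {s t : Finset V}
    (h : PendantStep G s t) : Pm G s ↔ Pm G t := by
  rcases h with ⟨x, hx, y, hy, hxy, hleaf, -, ht⟩ | ⟨x, hx, y, hy, hxy, hst, ht⟩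
  · have htco : (↑t : Set V) = (↑s : Set V) \ {x, y} := by
      subst ht
      ext w
      simp only [Finset.coe_erase, Set.mem_diff, Set.mem_singleton_iff, Finset.mem_coe,
        Set.mem_insert_iff]
      tauto
    constructor
    · rintro ⟨M, hverts, hM⟩
      -- the unique partner of x in M is y
      have hxM : x ∈ M.verts := by rw [hverts]; exact_mod_cast hx
      have hyM : y ∈ M.verts := by rw [hverts]; exact_mod_cast hy
      obtain ⟨c, hc, huc⟩ := hM hxM
      have hcy : c = y := by
        apply hleaf c _ (M.adj_sub hc)
        have : c ∈ M.verts := M.edge_vert hc.symm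
        rw [hverts] at this; exact_mod_cast this
      have hMxy : M.Adj x y := hcy ▸ hc
      have hux : ∀ w, M.Adj x w → w = y := fun w hw => (huc w hw).trans hcy
      refine ⟨M.deleteVerts ({x, y} : Set V), ?_, ?_⟩
      · rw [SimpleGraph.Subgraph.deleteVerts_verts, hverts, htco]
      · intro v hv
        rw [SimpleGraph.Subgraph.deleteVerts_verts] at hv
        obtain ⟨hvM, hvxy⟩ := hv
        obtain ⟨b, hb, hub⟩ := hM hvM
        have hbM : b ∈ M.verts := M.edge_vert hb.symm
        have hbx : b ≠ x := by
          rintro rfl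
          exact hvxy (by simp [hux v hb.symm])
        have hby : b ≠ y := by
          rintro rfl
          obtain ⟨d, hd, hud⟩ := hM hyM
          have h1 : v = d := hud v hb.symm
          have h2 : x = d := hud x hMxy.symm
          exact hvxy (by simp [h1.trans h2.symm])
        refine ⟨b, SimpleGraph.Subgraph.deleteVerts_adj.mpr
          ⟨hvM, hvxy, hbM, by simp [hbx, hby], hb⟩, ?_⟩
        intro c hc'
        exact hub c (SimpleGraph.Subgraph.deleteVerts_adj.mp hc').2.2.2.2
    · rintro ⟨M, hverts, hM⟩
      have hxt : x ∉ (↑t : Set V) := by rw [htco]; simp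
      have hyt : y ∉ (↑t : Set V) := by rw [htco]; simp
      refine ⟨M ⊔ G.subgraphOfAdj hxy, ?_, ?_⟩
      · rw [SimpleGraph.Subgraph.verts_sup, SimpleGraph.subgraphOfAdj_verts, hverts, htco,
          Set.diff_union_of_subset]
        rintro w (rfl | rfl)
        · exact_mod_cast hx
        · exact_mod_cast hy
      · apply hM.sup (SimpleGraph.Subgraph.IsMatching.subgraphOfAdj hxy)
        rw [hM.support_eq_verts,
          (SimpleGraph.Subgraph.IsMatching.subgraphOfAdj hxy).support_eq_verts, hverts,
          SimpleGraph.subgraphOfAdj_verts]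
        rw [Set.disjoint_right]
        rintro a (rfl | rfl) <;> assumption
  · subst hst ht
    constructor
    · intro _
      refine ⟨⊥, ?_, ?_⟩
      · simp
      · intro v hv
        simp only [SimpleGraph.Subgraph.verts_bot, Set.mem_empty_iff_false] at hv
    · intro _
      refine ⟨G.subgraphOfAdj hxy, ?_, SimpleGraph.Subgraph.IsMatching.subgraphOfAdj hxy⟩
      simp

/-- Let `G` be a finite simple graph and `R(G)` a residual graph of `G`.  Then `G` has a
perfect matching if and only if `R(G)` has a perfect matching. -/
theorem perfect_matching_iff_residual_perfect_matching [Fintype V] [DecidableEq V]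
    (G : SimpleGraph V) (s : Finset V) (hs : IsResidualSet G s) :
    (∃ M : G.Subgraph, M.IsPerfectMatching) ↔
      ∃ M : (G.induce (↑s : Set V)).Subgraph, M.IsPerfectMatching := by
  have h1 : (∃ M : G.Subgraph, M.IsPerfectMatching) ↔ Pm G Finset.univ := by
    constructor
    · rintro ⟨M, hM, hsp⟩
      exact ⟨M, by simp [hsp.verts_eq_univ], hM⟩
    · rintro ⟨M, hverts, hM⟩
      refine ⟨M, hM, ?_⟩
      rw [SimpleGraph.Subgraph.isSpanning_iff, hverts]
      simp
  obtain ⟨hgen, -⟩ := hs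
  have h2 : Pm G Finset.univ ↔ Pm G s := by
    induction hgen with
    | refl => rfl
    | tail _ hstep ih => exact ih.trans (pm_step hstep)
  rw [h1, h2, pm_iff_induce]
end

section
/- If T is a finite tree that admits a perfect matching and v ∈ V(T), then Staller has a strategy for the S-game of the Maker-Breaker domination game on T such that Dominator must select at least n(T)/2 vertices before his selected vertices form a dominating set of T, and such that v is the vertex Staller selects in her last move. -/
variable {V : Type*}

open SimpleGraph

private lemma shortest_concat_path {T : SimpleGraph V} [DecidableEq V]
    {r u z : V} (hadj : T.Adj z u) (hd : T.dist r z ≤ T.dist r u)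
    (hreach : T.Reachable r z) :
    ∃ q : T.Walk r z, (q.concat hadj).IsPath := by
  obtain ⟨w0, hw0⟩ := hreach.exists_walk_length_eq_dist
  refine ⟨w0.bypass, ?_⟩
  have hqp : w0.bypass.IsPath := w0.bypass_isPath
  have hql : w0.bypass.length = T.dist r z :=
    le_antisymm (hw0 ▸ w0.length_bypass_le) (SimpleGraph.dist_le _)
  have hu : u ∉ w0.bypass.support := by
    intro hu
    have h1 : T.dist r u ≤ (w0.bypass.takeUntil u hu).length := SimpleGraph.dist_le _
    have h2 := congr_arg SimpleGraph.Walk.length (w0.bypass.take_spec hu)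
    rw [SimpleGraph.Walk.length_append] at h2
    have h3 : (w0.bypass.dropUntil u hu).length = 0 := by omega
    have h4 : u = z := (SimpleGraph.Walk.nil_iff_length_eq.mpr h3).eq
    exact T.irrefl (h4 ▸ hadj)
  rw [← SimpleGraph.Walk.isPath_reverse_iff, SimpleGraph.Walk.reverse_concat]
  exact (hqp.reverse).cons
    (by simpa [SimpleGraph.Walk.support_reverse] using hu)

private lemma tree_unique_down {T : SimpleGraph V} [DecidableEq V] (hT : T.IsTree)
    {r u z₁ z₂ : V} (h1 : T.Adj z₁ u) (h2 : T.Adj z₂ u)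
    (d1 : T.dist r z₁ ≤ T.dist r u) (d2 : T.dist r z₂ ≤ T.dist r u) : z₁ = z₂ := by
  obtain ⟨q1, hq1⟩ := shortest_concat_path h1 d1 (hT.isConnected r z₁)
  obtain ⟨q2, hq2⟩ := shortest_concat_path h2 d2 (hT.isConnected r z₂)
  obtain ⟨P, -, hPu⟩ := hT.existsUnique_path r u
  have heq : q1.concat h1 = q2.concat h2 := (hPu _ hq1).trans (hPu _ hq2).symm
  have := congr_arg SimpleGraph.Walk.reverse heq
  rw [SimpleGraph.Walk.reverse_concat, SimpleGraph.Walk.reverse_concat] at this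
  rw [SimpleGraph.Walk.cons.injEq] at this
  exact this.1

private lemma peel_lemma [DecidableEq V] (T : SimpleGraph V) (hT : T.IsTree)
    (f : V → V) (hfadj : ∀ x, T.Adj x (f x)) (hfinv : ∀ x, f (f x) = x) (v : V) :
    ∀ S : Finset V, (∀ x ∈ S, f x ∈ S) → v ∈ S →
    ∃ (m : ℕ) (U W : ℕ → V),
      2 * m = S.card ∧ 1 ≤ m ∧ W (m - 1) = v ∧
      (∀ i < m, U i ∈ S ∧ W i ∈ S) ∧
      (∀ i < m, ∀ j < m, U i ≠ W j) ∧
      (∀ i < m, ∀ j < m, U i = U j → i = j) ∧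
      (∀ i < m, ∀ j < m, W i = W j → i = j) ∧
      (∀ i < m, ∀ x, T.Adj x (U i) → x ∉ S ∨ ∃ j, j ≤ i ∧ x = W j) := by
  intro S
  induction S using Finset.strongInduction with
  | _ S ih =>
  intro hcl hvS
  have hfv : f v ∈ S := hcl v hvS
  have hvfv : v ≠ f v := (hfadj v).ne
  by_cases hS2 : S.card ≤ 2
  · -- base case : S = {v, f v}
    have hsub : ({v, f v} : Finset V) ⊆ S := by
      intro x hx
      rcases Finset.mem_insert.mp hx with rfl | hx
      · exact hvS
      · rw [Finset.mem_singleton] at hx; exact hx ▸ hfv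
    have hcardp : ({v, f v} : Finset V).card = 2 := Finset.card_pair hvfv
    have hSeq : ({v, f v} : Finset V) = S :=
      Finset.eq_of_subset_of_card_le hsub (by omega)
    refine ⟨1, fun _ => f v, fun _ => v, by rw [← hSeq, hcardp], le_refl 1, rfl,
      fun i _ => ⟨hfv, hvS⟩, fun i _ j _ => hvfv.symm,
      fun i hi j hj _ => by omega, fun i hi j hj _ => by omega, ?_⟩
    intro i hi x hadj
    by_cases hxS : x ∈ S
    · rw [← hSeq] at hxS
      rcases Finset.mem_insert.mp hxS with rfl | hx
      · exact Or.inr ⟨0, Nat.zero_le _, rfl⟩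
      · rw [Finset.mem_singleton] at hx
        subst hx
        exact absurd hadj T.irrefl
    · exact Or.inl hxS
  · push_neg at hS2
    obtain ⟨u, huS, hmax⟩ := S.exists_max_image (fun x => T.dist v x) ⟨v, hvS⟩
    have hfu : f u ∈ S := hcl u huS
    have hd1 : T.dist v (f v) = 1 := SimpleGraph.dist_eq_one_iff_adj.mpr (hfadj v)
    have hdu2 : 2 ≤ T.dist v u := by
      by_contra hlt
      push_neg at hlt
      have hall : ∀ x ∈ S, T.dist v x ≤ 1 := fun x hx => by
        have : T.dist v x ≤ T.dist v u := hmax x hx; omega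
      obtain ⟨x, hxS, hxv, hxfv⟩ : ∃ x ∈ S, x ≠ v ∧ x ≠ f v := by
        by_contra hno
        push_neg at hno
        have hsub : S ⊆ {v, f v} := by
          intro x hx
          rcases eq_or_ne x v with rfl | hne
          · exact Finset.mem_insert_self _ _
          · exact Finset.mem_insert.mpr (Or.inr (Finset.mem_singleton.mpr (hno x hx hne)))
        have := Finset.card_le_card hsub
        have h2 : ({v, f v} : Finset V).card = 2 := Finset.card_pair hvfv
        omega
      have hxadj : T.Adj v x := by
        have h0 : T.dist v x ≠ 0 := fun h =>
          hxv ((hT.isConnected.dist_eq_zero_iff).mp h).symm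
        have h1 : T.dist v x = 1 := by have := hall x hxS; omega
        exact SimpleGraph.dist_eq_one_iff_adj.mp h1
      have hfxS : f x ∈ S := hcl x hxS
      have hfxv : f x ≠ v := fun hh => hxfv (by rw [← hfinv x, hh])
      have hfxadj : T.Adj v (f x) := by
        have h0 : T.dist v (f x) ≠ 0 := fun h =>
          hfxv ((hT.isConnected.dist_eq_zero_iff).mp h).symm
        have h1 : T.dist v (f x) = 1 := by have := hall _ hfxS; omega
        exact SimpleGraph.dist_eq_one_iff_adj.mp h1
      have hP1 : (SimpleGraph.Walk.cons hfxadj SimpleGraph.Walk.nil : T.Walk v (f x)).IsPath := by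
        simp [SimpleGraph.Walk.cons_isPath_iff, hfxv.symm]
      have hP2 : (SimpleGraph.Walk.cons hxadj
          (SimpleGraph.Walk.cons (hfadj x) SimpleGraph.Walk.nil) : T.Walk v (f x)).IsPath := by
        simp [SimpleGraph.Walk.cons_isPath_iff, (hfadj x).ne, hxv.symm, hfxv.symm]
      obtain ⟨P, -, hPu⟩ := hT.existsUnique_path v (f x)
      have heq := (hPu _ hP1).trans (hPu _ hP2).symm
      have := congr_arg SimpleGraph.Walk.length heq
      simp at this
    have hdmax : ∀ x ∈ S, T.dist v x ≤ T.dist v u := fun x hx => hmax x hx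
    have huv : u ≠ v := by
      intro h; rw [h, SimpleGraph.dist_self] at hdu2; omega
    have hufv : u ≠ f v := by
      intro h; rw [h, hd1] at hdu2; omega
    have hfuv : f u ≠ v := fun h => hufv (by rw [← hfinv u, h])
    have hufu : u ≠ f u := (hfadj u).ne
    have hleaf : ∀ x ∈ S, T.Adj x u → x = f u := fun x hxS hxu =>
      tree_unique_down hT hxu ((hfadj u).symm) (hdmax x hxS) (hdmax _ hfu)
    set S' : Finset V := (S.erase u).erase (f u) with hS'
    have hmemS' : ∀ x, x ∈ S' ↔ x ∈ S ∧ x ≠ u ∧ x ≠ f u := by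
      intro x
      rw [hS', Finset.mem_erase, Finset.mem_erase]
      tauto
    have hfuSe : f u ∈ S.erase u := Finset.mem_erase.mpr ⟨hufu.symm, hfu⟩
    have hS'card : S'.card = S.card - 2 := by
      rw [hS', Finset.card_erase_of_mem hfuSe, Finset.card_erase_of_mem huS]
      omega
    have hS'cl : ∀ x ∈ S', f x ∈ S' := by
      intro x hx
      rw [hmemS'] at hx ⊢
      refine ⟨hcl x hx.1, fun h => hx.2.2 (by rw [← hfinv x, h]), fun h => hx.2.1 ?_⟩
      have := congr_arg f h
      rw [hfinv, hfinv] at this; exact this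
    have hvS' : v ∈ S' := (hmemS' v).mpr ⟨hvS, huv.symm ∘ Eq.symm ∘ Eq.symm, hfuv.symm ∘ Eq.symm ∘ Eq.symm⟩
    have hss : S' ⊂ S :=
      lt_of_le_of_lt (Finset.erase_subset _ _) (Finset.erase_ssubset huS)
    obtain ⟨m', U', W', hc', hm1', hWv', hmem', hUW', hUinj', hWinj', hP1'⟩ :=
      ih S' hss hS'cl hvS'
    have huS'n : u ∉ S' := fun h => ((hmemS' u).mp h).2.1 rfl
    have hfuS'n : f u ∉ S' := fun h => ((hmemS' (f u)).mp h).2.2 rfl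
    refine ⟨m' + 1, (fun i => if i = 0 then u else U' (i - 1)),
      (fun i => if i = 0 then f u else W' (i - 1)), by omega, by omega, ?_, ?_, ?_, ?_, ?_, ?_⟩
    · have : m' + 1 - 1 ≠ 0 := by omega
      simp only [this, if_neg]
      exact hWv'
    · intro i hi
      by_cases h0 : i = 0
      · simp [h0, huS, hfu]
      · simp only [h0, if_neg]
        have hi' : i - 1 < m' := by omega
        exact ⟨(hmemS' _).mp (hmem' _ hi').1 |>.1, (hmemS' _).mp (hmem' _ hi').2 |>.1⟩
    · intro i hi j hj
      dsimp only
      by_cases h0 : i = 0 <;> by_cases h1 : j = 0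
      · subst h0; subst h1; rw [if_pos rfl, if_pos rfl]; exact hufu
      · subst h0; rw [if_pos rfl, if_neg h1]
        intro h
        exact huS'n (by rw [h]; exact (hmem' (j-1) (by omega)).2)
      · subst h1; rw [if_neg h0, if_pos rfl]
        intro h
        exact hfuS'n (by rw [← h]; exact (hmem' (i-1) (by omega)).1)
      · rw [if_neg h0, if_neg h1]
        exact hUW' (i-1) (by omega) (j-1) (by omega)
    · intro i hi j hj hij
      dsimp only at hij
      by_cases h0 : i = 0 <;> by_cases h1 : j = 0
      · omega
      · subst h0; rw [if_pos rfl, if_neg h1] at hij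
        exact absurd (by rw [hij]; exact (hmem' (j-1) (by omega)).1) huS'n
      · subst h1; rw [if_neg h0, if_pos rfl] at hij
        exact absurd (by rw [← hij]; exact (hmem' (i-1) (by omega)).1) huS'n
      · rw [if_neg h0, if_neg h1] at hij
        have := hUinj' (i-1) (by omega) (j-1) (by omega) hij
        omega
    · intro i hi j hj hij
      dsimp only at hij
      by_cases h0 : i = 0 <;> by_cases h1 : j = 0
      · omega
      · subst h0; rw [if_pos rfl, if_neg h1] at hij
        exact absurd (by rw [hij]; exact (hmem' (j-1) (by omega)).2) hfuS'n
      · subst h1; rw [if_neg h0, if_pos rfl] at hij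
        exact absurd (by rw [← hij]; exact (hmem' (i-1) (by omega)).2) hfuS'n
      · rw [if_neg h0, if_neg h1] at hij
        have := hWinj' (i-1) (by omega) (j-1) (by omega) hij
        omega
    · intro i hi x hadj
      dsimp only at hadj ⊢
      by_cases h0 : i = 0
      · subst h0; rw [if_pos rfl] at hadj
        by_cases hxS : x ∈ S
        · exact Or.inr ⟨0, Nat.zero_le _, by rw [if_pos rfl]; exact hleaf x hxS hadj⟩
        · exact Or.inl hxS
      · rw [if_neg h0] at hadj
        rcases hP1' (i-1) (by omega) x hadj with hxn | ⟨j, hj, hxW⟩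
        · by_cases hxS : x ∈ S
          · have hcase : x = u ∨ x = f u := by
              by_contra hc
              push_neg at hc
              exact hxn ((hmemS' x).mpr ⟨hxS, hc.1, hc.2⟩)
            rcases hcase with rfl | rfl
            · exfalso
              have hU'S : U' (i-1) ∈ S := ((hmemS' _).mp (hmem' (i-1) (by omega)).1).1
              have heq := hleaf (U' (i-1)) hU'S hadj.symm
              exact hfuS'n (by rw [← heq]; exact (hmem' (i-1) (by omega)).1)
            · exact Or.inr ⟨0, Nat.zero_le _, by rw [if_pos rfl]⟩
          · exact Or.inl hxS
        · exact Or.inr ⟨j+1, by omega, by rw [if_neg (by omega : ¬ j+1 = 0)]; simpa using hxW⟩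

/-- If `T` is a finite tree admitting a perfect matching and `v ∈ V(T)`, then Staller has a
strategy `σ` for the S-game of the Maker-Breaker domination game on `T` (given the history
of the game, `σ` selects a not-yet-selected vertex) such that the following holds for every
play `p 0, p 1, p 2, …` consistent with `σ`, where Staller selects the even-indexed
vertices `p 0, p 2, …` and Dominator the odd-indexed ones `p 1, p 3, …`, all selected
vertices being distinct: if `k` is such that Dominator's first `k` selections are the first
of his selections to form a dominating set of `T`, then `k ≥ n(T)/2` (so Dominator must
select at least `n(T)/2` vertices), and the last vertex selected by Staller up to that
point, namely her `k`-th move `p (2*(k-1))`, is `v`. -/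
theorem staller_strategy_on_tree_with_perfect_matching [Fintype V] [DecidableEq V]
    (T : SimpleGraph V) (hT : T.IsTree)
    (hpm : ∃ M : T.Subgraph, M.IsPerfectMatching) (v : V) :
    ∃ σ : List V → V,
      (∀ h : List V, h.toFinset ≠ Finset.univ → σ h ∉ h) ∧
      ∀ p : ℕ → V, Set.InjOn p (Set.Iio (Fintype.card V)) →
        (∀ i : ℕ, 2 * i < Fintype.card V → p (2 * i) = σ ((List.range (2 * i)).map p)) →
        ∀ k : ℕ, 2 * k ≤ Fintype.card V →
          Dominates T ∅ ((Finset.range k).image fun i => p (2 * i + 1)) →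
          (∀ j, j < k →
            ¬ Dominates T ∅ ((Finset.range j).image fun i => p (2 * i + 1))) →
          Fintype.card V ≤ 2 * k ∧ p (2 * (k - 1)) = v := by
  classical
  obtain ⟨M, hM⟩ := hpm
  have hMadj : ∀ x : V, M.Adj x ((hM.1 (hM.2 x)).choose) :=
    fun x => (hM.1 (hM.2 x)).choose_spec.1
  set f : V → V := fun x => (hM.1 (hM.2 x)).choose with hf
  have hfadj : ∀ x, T.Adj x (f x) := fun x => M.adj_sub (hMadj x)
  have hfinv : ∀ x, f (f x) = x := by
    intro x
    exact (hM.1 (hM.2 (f x))).unique (hMadj (f x)) ((hMadj x).symm)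
  obtain ⟨m, U, W, hcard, h1m, hWv, hmem, hUW, hUinj, hWinj, hP1⟩ :=
    peel_lemma T hT f hfadj hfinv v Finset.univ (fun x _ => Finset.mem_univ _)
      (Finset.mem_univ v)
  rw [Finset.card_univ] at hcard
  have hP1' : ∀ i < m, ∀ x, T.Adj x (U i) → ∃ j, j ≤ i ∧ x = W j :=
    fun i hi x hx => (hP1 i hi x hx).resolve_left (by simp)
  refine ⟨fun h =>
      if h1 : h.length / 2 < m ∧ W (h.length / 2) ∉ h then W (h.length / 2)
      else if h2 : ∃ i, i < m ∧ U i ∉ h then U (Nat.find h2)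
      else if h3 : ∃ x : V, x ∉ h then h3.choose
      else v, ?_, ?_⟩
  · intro h hne
    dsimp only
    split_ifs with h1 h2 h3
    · exact h1.2
    · exact (Nat.find_spec h2).2
    · exact h3.choose_spec
    · exfalso
      apply hne
      apply Finset.eq_univ_iff_forall.mpr
      intro x
      rw [List.mem_toFinset]
      by_contra hx
      exact h3 ⟨x, hx⟩
  · intro p hinj hcons k hk2 hdom hmin
    have hinj' : ∀ a b : ℕ, a < Fintype.card V → b < Fintype.card V → p a = p b → a = b :=
      fun a b ha hb hab => hinj (Set.mem_Iio.mpr ha) (Set.mem_Iio.mpr hb) hab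
    have hkm_le : k ≤ m := by omega
    by_cases hA : ∀ t, t < k → p (2 * t) = W t
    · have hmk : m ≤ k := by
        by_contra hmk
        push_neg at hmk
        have hsub : ∀ i, i < k → U i ∈ (Finset.range k).image (fun i => p (2 * i + 1)) := by
          intro i hik
          obtain ⟨d, hdmem, hdc⟩ := hdom (U i) (Set.notMem_empty _)
          rcases hdc with hdU | hadj
          · exact hdU ▸ hdmem
          · exfalso
            obtain ⟨j, hji, hdW⟩ := hP1' i (lt_trans hik hmk) d hadj
            obtain ⟨ℓ, hℓ, hdp⟩ := Finset.mem_image.mp hdmem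
            rw [Finset.mem_range] at hℓ
            have hWj : p (2 * j) = W j := hA j (lt_of_le_of_lt hji hik)
            have : 2 * ℓ + 1 = 2 * j :=
              hinj' _ _ (by omega) (by omega) (by rw [hdp, hdW, hWj])
            omega
        have himg : (Finset.range k).image U ⊆ (Finset.range k).image (fun i => p (2 * i + 1)) := by
          intro x hx
          obtain ⟨i, hi, rfl⟩ := Finset.mem_image.mp hx
          rw [Finset.mem_range] at hi
          exact hsub i hi
        have hcardU : ((Finset.range k).image U).card = k := by
          rw [Finset.card_image_of_injOn, Finset.card_range]
          intro a ha b hb hab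
          rw [Finset.coe_range, Set.mem_Iio] at ha hb
          exact hUinj a (by omega) b (by omega) hab
        have hcardD : ((Finset.range k).image (fun i => p (2 * i + 1))).card ≤ k := by
          refine le_trans Finset.card_image_le ?_
          simp
        have heq : (Finset.range k).image U = (Finset.range k).image (fun i => p (2 * i + 1)) :=
          Finset.eq_of_subset_of_card_le himg (by omega)
        obtain ⟨d, hdmem, hdc⟩ := hdom (U k) (Set.notMem_empty _)
        rw [← heq] at hdmem
        obtain ⟨j, hj, rfl⟩ := Finset.mem_image.mp hdmem
        rw [Finset.mem_range] at hj
        rcases hdc with hdU | hadj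
        · have := hUinj j (by omega) k hmk hdU
          omega
        · obtain ⟨j', hj', hW⟩ := hP1' k hmk _ hadj
          exact hUW j (by omega) j' (by omega) hW
      have hkm : k = m := le_antisymm hkm_le hmk
      refine ⟨by omega, ?_⟩
      rw [hA (k - 1) (by omega), hkm]
      exact hWv
    · exfalso
      push_neg at hA
      have ht₀k : Nat.find hA < k := (Nat.find_spec hA).1
      have ht₀ne : p (2 * Nat.find hA) ≠ W (Nat.find hA) := (Nat.find_spec hA).2
      set t₀ := Nat.find hA with ht₀def
      have hbefore : ∀ s, s < t₀ → p (2 * s) = W s := by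
        intro s hs
        have := Nat.find_min hA hs
        push_neg at this
        exact this (by omega)
      have h2t₀ : 2 * t₀ < Fintype.card V := by omega
      have ht₀m : t₀ < m := by omega
      have hps := hcons t₀ h2t₀
      simp only [List.length_map, List.length_range] at hps
      have hdiv : 2 * t₀ / 2 = t₀ := by omega
      rw [hdiv] at hps
      set h : List V := (List.range (2 * t₀)).map p with hh
      have hmemh : ∀ x, x ∈ h ↔ ∃ r, r < 2 * t₀ ∧ p r = x := by
        intro x
        rw [hh, List.mem_map]
        constructor
        · rintro ⟨a, ha, rfl⟩
          exact ⟨a, List.mem_range.mp ha, rfl⟩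
        · rintro ⟨r, hr, rfl⟩
          exact ⟨r, List.mem_range.mpr hr, rfl⟩
      have hWmem : W t₀ ∈ h := by
        by_contra hWn
        rw [dif_pos ⟨ht₀m, hWn⟩] at hps
        exact ht₀ne hps
      rw [dif_neg (fun hc => hc.2 hWmem)] at hps
      obtain ⟨r, hr, hpr⟩ := (hmemh _).mp hWmem
      have hodd : ∃ s, s < t₀ ∧ r = 2 * s + 1 := by
        rcases Nat.even_or_odd r with he | ho
        · exfalso
          obtain ⟨s, rfl⟩ := he
          have h1 : p (2 * s) = W s := hbefore s (by omega)
          have h2 : W s = W t₀ := by rw [← h1, ← hpr]; ring_nf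
          have := hWinj s (by omega) t₀ ht₀m h2
          omega
        · obtain ⟨s, rfl⟩ := ho
          exact ⟨s, by omega, rfl⟩
      have hH' : ∃ i, i < t₀ ∧ U i ∉ h := by
        by_contra hno
        push_neg at hno
        have hsub2 : insert (W t₀) ((Finset.range t₀).image U) ⊆
            (Finset.range t₀).image (fun s => p (2 * s + 1)) := by
          intro x hx
          rcases Finset.mem_insert.mp hx with rfl | hx
          · obtain ⟨s, hs, rfl⟩ := hodd
            exact Finset.mem_image.mpr ⟨s, Finset.mem_range.mpr hs, hpr⟩
          · obtain ⟨i, hi, rfl⟩ := Finset.mem_image.mp hx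
            rw [Finset.mem_range] at hi
            obtain ⟨r', hr', hpr'⟩ := (hmemh _).mp (hno i hi)
            rcases Nat.even_or_odd r' with he | ho
            · exfalso
              obtain ⟨s', rfl⟩ := he
              have h1 : p (2 * s') = W s' := hbefore s' (by omega)
              have h2 : W s' = U i := by rw [← h1, ← hpr']; ring_nf
              exact hUW i (by omega) s' (by omega) h2.symm
            · obtain ⟨s', rfl⟩ := ho
              exact Finset.mem_image.mpr ⟨s', Finset.mem_range.mpr (by omega), hpr'⟩
        have hnm : W t₀ ∉ (Finset.range t₀).image U := by
          intro hmem2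
          obtain ⟨i, hi, heq⟩ := Finset.mem_image.mp hmem2
          rw [Finset.mem_range] at hi
          exact hUW i (by omega) t₀ ht₀m heq
        have hio : Set.InjOn U (Finset.range t₀) := by
          intro a ha b hb hab
          rw [Finset.coe_range, Set.mem_Iio] at ha hb
          exact hUinj a (by omega) b (by omega) hab
        have hc1 : (insert (W t₀) ((Finset.range t₀).image U)).card = t₀ + 1 := by
          rw [Finset.card_insert_of_notMem hnm, Finset.card_image_of_injOn hio,
            Finset.card_range]
        have hc2 := Finset.card_le_card hsub2
        have hc3 : ((Finset.range t₀).image (fun s => p (2 * s + 1))).card ≤ t₀ :=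
          le_trans Finset.card_image_le (by simp)
        omega
      have hH : ∃ i, i < m ∧ U i ∉ h :=
        ⟨hH'.choose, lt_trans hH'.choose_spec.1 ht₀m, hH'.choose_spec.2⟩
      rw [dif_pos hH] at hps
      have hi₀spec := Nat.find_spec hH
      have hi₀t₀ : Nat.find hH < t₀ :=
        lt_of_le_of_lt (Nat.find_le ⟨lt_trans hH'.choose_spec.1 ht₀m, hH'.choose_spec.2⟩)
          hH'.choose_spec.1
      obtain ⟨d, hdmem, hdc⟩ := hdom (U (Nat.find hH)) (Set.notMem_empty _)
      obtain ⟨ℓ, hℓ, rfl⟩ := Finset.mem_image.mp hdmem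
      rw [Finset.mem_range] at hℓ
      rcases hdc with hdU | hadj
      · have : 2 * ℓ + 1 = 2 * t₀ :=
          hinj' _ _ (by omega) (by omega) (by rw [hdU, hps])
        omega
      · obtain ⟨j, hji, hW⟩ := hP1' (Nat.find hH) hi₀spec.1 _ hadj
        have hWj : p (2 * j) = W j := hbefore j (by omega)
        have : 2 * ℓ + 1 = 2 * j :=
          hinj' _ _ (by omega) (by omega) (by rw [hW, hWj])
        omega
end

section
/- Let G be a finite simple graph, R(G) a residual graph of G, and H = G − V(R(G)). Then γ_MB'(G) = n(H)/2 + γ_MB'(R(G)), with the convention that the right-hand side is ∞ when γ_MB'(R(G)) = ∞. -/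
variable {V : Type*}

section MBAux

lemma exists_not_mem_of_ne_univ {α : Type*} [Fintype α] {s : Finset α}
    (h : s ≠ Finset.univ) : ∃ w, w ∉ s := by
  by_contra hc
  push_neg at hc
  exact h (Finset.eq_univ_iff_forall.2 hc)

variable {W : Type*} [Fintype W] [DecidableEq W] {G : SimpleGraph W} {x y : W} {A : Set W}

lemma noWin (hx : ∀ w, G.Adj x w → w = y) {t : Bool} {k : ℕ} {D S : Finset W}
    (h : MBWin G ∅ t k D S) :
    x ∉ D → y ∉ D → x ∈ S → y ∈ S → False := by
  induction h with
  | win t k D S hd =>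
    intro hxD hyD _ _
    obtain ⟨u, huD, hu⟩ := hd x (Set.notMem_empty x)
    rcases hu with rfl | hadj
    · exact hxD huD
    · exact hyD ((hx u hadj.symm) ▸ huD)
  | dmove k D S v hvD hvS hsub ih =>
    intro hxD hyD hxS hyS
    refine ih ?_ ?_ hxS hyS
    · intro hmem
      rcases Finset.mem_insert.1 hmem with rfl | h
      · exact hvS hxS
      · exact hxD h
    · intro hmem
      rcases Finset.mem_insert.1 hmem with rfl | h
      · exact hvS hyS
      · exact hyD h
  | smove k D S hne hbr ih =>
    intro hxD hyD hxS hyS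
    obtain ⟨w, hw⟩ := exists_not_mem_of_ne_univ hne
    have hwD : w ∉ D := fun h => hw (Finset.mem_union_left _ h)
    have hwS : w ∉ S := fun h => hw (Finset.mem_union_right _ h)
    exact ih w hwD hwS hxD hyD (Finset.mem_insert_of_mem hxS) (Finset.mem_insert_of_mem hyS)

lemma notMem_img_x (hA : ∀ w, w ∈ A ↔ (w ≠ x ∧ w ≠ y)) (F : Finset ↥A) :
    x ∉ F.image Subtype.val := by
  intro hmem
  obtain ⟨u, -, he⟩ := Finset.mem_image.1 hmem
  exact ((hA _).1 u.2).1 he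

lemma notMem_img_y (hA : ∀ w, w ∈ A ↔ (w ≠ x ∧ w ≠ y)) (F : Finset ↥A) :
    y ∉ F.image Subtype.val := by
  intro hmem
  obtain ⟨u, -, he⟩ := Finset.mem_image.1 hmem
  exact ((hA _).1 u.2).2 he

lemma mem_img {F : Finset ↥A} {u : ↥A} (h : (↑u : W) ∈ F.image Subtype.val) : u ∈ F := by
  obtain ⟨u', hu', he⟩ := Finset.mem_image.1 h
  exact (Subtype.ext he : u' = u) ▸ hu'

lemma dominates_real (hxy : G.Adj x y) (hA : ∀ w, w ∈ A ↔ (w ≠ x ∧ w ≠ y))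
    {D₀ : Finset ↥A} (hd : Dominates (G.induce A) ∅ D₀) {p : W} (hp : p = x ∨ p = y)
    {D : Finset W} (hpD : p ∈ D) (hsub : D₀.image Subtype.val ⊆ D) :
    Dominates G ∅ D := by
  intro v _
  by_cases hvx : v = x
  · subst hvx
    rcases hp with rfl | rfl
    · exact ⟨p, hpD, Or.inl rfl⟩
    · exact ⟨p, hpD, Or.inr hxy.symm⟩
  · by_cases hvy : v = y
    · subst hvy
      rcases hp with rfl | rfl
      · exact ⟨p, hpD, Or.inr hxy⟩
      · exact ⟨p, hpD, Or.inl rfl⟩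
    · have hvA : v ∈ A := (hA v).2 ⟨hvx, hvy⟩
      obtain ⟨u₀, hu₀, hu⟩ := hd ⟨v, hvA⟩ (Set.notMem_empty _)
      refine ⟨↑u₀, hsub (Finset.mem_image_of_mem _ hu₀), ?_⟩
      rcases hu with rfl | hadj
      · exact Or.inl rfl
      · exact Or.inr hadj

end MBAux

section MBAux2
set_option linter.unusedSectionVars false
set_option maxHeartbeats 1000000

variable {W : Type*} [Fintype W] [DecidableEq W] {G : SimpleGraph W} {x y : W} {A : Set W}

lemma up (hxy : G.Adj x y) (hA : ∀ w, w ∈ A ↔ (w ≠ x ∧ w ≠ y))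
    [Fintype ↥A] {t : Bool} {k : ℕ} {D₀ S₀ : Finset ↥A}
    (h : MBWin (G.induce A) ∅ t k D₀ S₀) :
    MBWin G ∅ t (k+1) (D₀.image Subtype.val) (S₀.image Subtype.val) ∧
    MBWin G ∅ t k (insert y (D₀.image Subtype.val)) (insert x (S₀.image Subtype.val)) ∧
    MBWin G ∅ t k (insert x (D₀.image Subtype.val)) (insert y (S₀.image Subtype.val)) := by
  have hxny : x ≠ y := hxy.ne
  induction h with
  | win t k D₀ S₀ hd =>
    refine ⟨?_, ?_, ?_⟩
    · cases t with
      | true =>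
        refine MBWin.dmove k _ _ y (notMem_img_y hA _) (notMem_img_y hA _) ?_
        exact MBWin.win _ _ _ _ (dominates_real hxy hA hd (Or.inr rfl)
          (Finset.mem_insert_self _ _) (Finset.subset_insert _ _))
      | false =>
        refine MBWin.smove _ _ _ ?_ ?_
        · intro hequ
          have hmem : x ∈ D₀.image Subtype.val ∪ S₀.image Subtype.val :=
            hequ ▸ Finset.mem_univ x
          rcases Finset.mem_union.1 hmem with h | h
          · exact notMem_img_x hA _ h
          · exact notMem_img_x hA _ h
        · intro v hvD hvS
          by_cases hvy : v = y
          · subst hvy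
            refine MBWin.dmove k _ _ x (notMem_img_x hA _) ?_ ?_
            · intro hmem
              rcases Finset.mem_insert.1 hmem with h | h
              · exact hxny h
              · exact notMem_img_x hA _ h
            · exact MBWin.win _ _ _ _ (dominates_real hxy hA hd (Or.inl rfl)
                (Finset.mem_insert_self _ _) (Finset.subset_insert _ _))
          · refine MBWin.dmove k _ _ y (notMem_img_y hA _) ?_ ?_
            · intro hmem
              rcases Finset.mem_insert.1 hmem with h | h
              · exact hvy h.symm
              · exact notMem_img_y hA _ h
            · exact MBWin.win _ _ _ _ (dominates_real hxy hA hd (Or.inr rfl)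
                (Finset.mem_insert_self _ _) (Finset.subset_insert _ _))
    · exact MBWin.win _ _ _ _ (dominates_real hxy hA hd (Or.inr rfl)
        (Finset.mem_insert_self _ _) (Finset.subset_insert _ _))
    · exact MBWin.win _ _ _ _ (dominates_real hxy hA hd (Or.inl rfl)
        (Finset.mem_insert_self _ _) (Finset.subset_insert _ _))
  | dmove k D₀ S₀ v₀ hvD₀ hvS₀ hsub ih =>
    obtain ⟨iha, ihb1, ihb2⟩ := ih
    have hvx : (↑v₀ : W) ≠ x := ((hA _).1 v₀.2).1
    have hvy : (↑v₀ : W) ≠ y := ((hA _).1 v₀.2).2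
    have hvD : (↑v₀ : W) ∉ D₀.image Subtype.val := fun h => hvD₀ (mem_img h)
    have hvS : (↑v₀ : W) ∉ S₀.image Subtype.val := fun h => hvS₀ (mem_img h)
    refine ⟨?_, ?_, ?_⟩
    · refine MBWin.dmove (k+1) _ _ ↑v₀ hvD hvS ?_
      rw [show insert (↑v₀ : W) (D₀.image Subtype.val) = (insert v₀ D₀).image Subtype.val
        from (Finset.image_insert _ _ _).symm]
      exact iha
    · refine MBWin.dmove k _ _ ↑v₀ ?_ ?_ ?_
      · intro hmem
        rcases Finset.mem_insert.1 hmem with h | h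
        · exact hvy h
        · exact hvD h
      · intro hmem
        rcases Finset.mem_insert.1 hmem with h | h
        · exact hvx h
        · exact hvS h
      · rw [show insert (↑v₀ : W) (insert y (D₀.image Subtype.val))
            = insert y ((insert v₀ D₀).image Subtype.val) from by
          rw [Finset.image_insert, Finset.insert_comm]]
        exact ihb1
    · refine MBWin.dmove k _ _ ↑v₀ ?_ ?_ ?_
      · intro hmem
        rcases Finset.mem_insert.1 hmem with h | h
        · exact hvx h
        · exact hvD h
      · intro hmem
        rcases Finset.mem_insert.1 hmem with h | h
        · exact hvy h
        · exact hvS h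
      · rw [show insert (↑v₀ : W) (insert x (D₀.image Subtype.val))
            = insert x ((insert v₀ D₀).image Subtype.val) from by
          rw [Finset.image_insert, Finset.insert_comm]]
        exact ihb2
  | smove k D₀ S₀ hne hbr ih =>
    obtain ⟨w₀, hw₀⟩ := exists_not_mem_of_ne_univ hne
    have hw₀D : w₀ ∉ D₀ := fun h => hw₀ (Finset.mem_union_left _ h)
    have hw₀S : w₀ ∉ S₀ := fun h => hw₀ (Finset.mem_union_right _ h)
    have hwx : (↑w₀ : W) ≠ x := ((hA _).1 w₀.2).1
    have hwy : (↑w₀ : W) ≠ y := ((hA _).1 w₀.2).2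
    have hb : ∀ p q : W, (p = x ∧ q = y ∨ p = y ∧ q = x) →
        MBWin G ∅ false k (insert q (D₀.image Subtype.val))
          (insert p (S₀.image Subtype.val)) := by
      intro p q hpq
      refine MBWin.smove _ _ _ ?_ ?_
      · intro hequ
        have hmem : (↑w₀ : W) ∈ insert q (D₀.image Subtype.val) ∪
            insert p (S₀.image Subtype.val) := hequ ▸ Finset.mem_univ _
        rcases Finset.mem_union.1 hmem with h | h <;>
          rcases Finset.mem_insert.1 h with h' | h'
        · rcases hpq with ⟨-, rfl⟩ | ⟨-, rfl⟩
          · exact hwy h'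
          · exact hwx h'
        · exact hw₀D (mem_img h')
        · rcases hpq with ⟨rfl, -⟩ | ⟨rfl, -⟩
          · exact hwx h'
          · exact hwy h'
        · exact hw₀S (mem_img h')
      · intro v hvD hvS
        have hvq : v ≠ q := fun h => hvD (h ▸ Finset.mem_insert_self _ _)
        have hvp : v ≠ p := fun h => hvS (h ▸ Finset.mem_insert_self _ _)
        have hvx : v ≠ x := by
          rcases hpq with ⟨rfl, rfl⟩ | ⟨rfl, rfl⟩
          · exact hvp
          · exact hvq
        have hvy : v ≠ y := by
          rcases hpq with ⟨rfl, rfl⟩ | ⟨rfl, rfl⟩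
          · exact hvq
          · exact hvp
        have hvA : v ∈ A := (hA v).2 ⟨hvx, hvy⟩
        have hvD₀ : (⟨v, hvA⟩ : ↥A) ∉ D₀ := fun h =>
          hvD (Finset.mem_insert_of_mem (Finset.mem_image_of_mem _ h))
        have hvS₀ : (⟨v, hvA⟩ : ↥A) ∉ S₀ := fun h =>
          hvS (Finset.mem_insert_of_mem (Finset.mem_image_of_mem _ h))
        rw [show insert v (insert p (S₀.image Subtype.val))
            = insert p ((insert (⟨v, hvA⟩ : ↥A) S₀).image Subtype.val) from by
          rw [Finset.image_insert, Finset.insert_comm]]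
        rcases hpq with ⟨rfl, rfl⟩ | ⟨rfl, rfl⟩
        · exact (ih ⟨v, hvA⟩ hvD₀ hvS₀).2.1
        · exact (ih ⟨v, hvA⟩ hvD₀ hvS₀).2.2
    refine ⟨?_, hb x y (Or.inl ⟨rfl, rfl⟩), hb y x (Or.inr ⟨rfl, rfl⟩)⟩
    refine MBWin.smove _ _ _ ?_ ?_
    · intro hequ
      have hmem : x ∈ D₀.image Subtype.val ∪ S₀.image Subtype.val :=
        hequ ▸ Finset.mem_univ x
      rcases Finset.mem_union.1 hmem with h | h
      · exact notMem_img_x hA _ h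
      · exact notMem_img_x hA _ h
    · intro v hvD hvS
      by_cases hvx : v = x
      · subst hvx
        refine MBWin.dmove k _ _ y (notMem_img_y hA _) ?_ ?_
        · intro hmem
          rcases Finset.mem_insert.1 hmem with h | h
          · exact hxny h.symm
          · exact notMem_img_y hA _ h
        · exact hb v y (Or.inl ⟨rfl, rfl⟩)
      · by_cases hvy : v = y
        · subst hvy
          refine MBWin.dmove k _ _ x (notMem_img_x hA _) ?_ ?_
          · intro hmem
            rcases Finset.mem_insert.1 hmem with h | h
            · exact hxny h
            · exact notMem_img_x hA _ h
          · exact hb v x (Or.inr ⟨rfl, rfl⟩)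
        · have hvA : v ∈ A := (hA v).2 ⟨hvx, hvy⟩
          have h1 : (⟨v, hvA⟩ : ↥A) ∉ D₀ := fun h => hvD (Finset.mem_image_of_mem _ h)
          have h2 : (⟨v, hvA⟩ : ↥A) ∉ S₀ := fun h => hvS (Finset.mem_image_of_mem _ h)
          rw [show insert v (S₀.image Subtype.val)
              = (insert (⟨v, hvA⟩ : ↥A) S₀).image Subtype.val from by
            rw [Finset.image_insert]]
          exact (ih ⟨v, hvA⟩ h1 h2).1

end MBAux2

section MBAux3
set_option linter.unusedSectionVars false
set_option maxHeartbeats 1000000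

variable {W : Type*} [Fintype W] [DecidableEq W] {G : SimpleGraph W} {x y : W} {A : Set W}

lemma low (hxy : G.Adj x y) (hx : ∀ w, G.Adj x w → w = y)
    (hA : ∀ w, w ∈ A ↔ (w ≠ x ∧ w ≠ y)) [Fintype ↥A] :
    ∀ {t : Bool} {k : ℕ} {D S : Finset W}, MBWin G ∅ t k D S →
      ∀ (D₀ S₀ : Finset ↥A), D = insert x (D₀.image Subtype.val) →
        S = insert y (S₀.image Subtype.val) → MBWin (G.induce A) ∅ t k D₀ S₀ := by
  intro t k D S h
  induction h with
  | win t k D S hd =>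
    intro D₀ S₀ hD hS
    refine MBWin.win _ _ _ _ ?_
    intro v₀ _
    obtain ⟨u, huD, hu⟩ := hd ↑v₀ (Set.notMem_empty _)
    rw [hD] at huD
    rcases Finset.mem_insert.1 huD with rfl | humem
    · rcases hu with h | hadj
      · exact absurd h.symm ((hA _).1 v₀.2).1
      · exact absurd (hx _ hadj) ((hA _).1 v₀.2).2
    · obtain ⟨u₀, hu₀, he⟩ := Finset.mem_image.1 humem
      refine ⟨u₀, hu₀, ?_⟩
      subst he
      rcases hu with h | hadj
      · exact Or.inl (Subtype.ext h)
      · exact Or.inr hadj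
  | dmove k D S v hvD hvS hsub ih =>
    intro D₀ S₀ hD hS
    subst hD; subst hS
    have hvx : v ≠ x := fun h => hvD (h ▸ Finset.mem_insert_self _ _)
    have hvy : v ≠ y := fun h => hvS (h ▸ Finset.mem_insert_self _ _)
    have hvA : v ∈ A := (hA v).2 ⟨hvx, hvy⟩
    refine MBWin.dmove k _ _ ⟨v, hvA⟩ ?_ ?_ ?_
    · exact fun h => hvD (Finset.mem_insert_of_mem (Finset.mem_image_of_mem _ h))
    · exact fun h => hvS (Finset.mem_insert_of_mem (Finset.mem_image_of_mem _ h))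
    · refine ih (insert ⟨v, hvA⟩ D₀) S₀ ?_ rfl
      rw [Finset.image_insert, Finset.insert_comm]
  | smove k D S hne hbr ih =>
    intro D₀ S₀ hD hS
    subst hD; subst hS
    by_cases hdom : Dominates (G.induce A) ∅ D₀
    · exact MBWin.win _ _ _ _ hdom
    · refine MBWin.smove _ _ _ ?_ ?_
      · intro hequ
        apply hne
        apply Finset.eq_univ_iff_forall.2
        intro w
        by_cases hwx : w = x
        · subst hwx
          exact Finset.mem_union_left _ (Finset.mem_insert_self _ _)
        · by_cases hwy : w = y
          · subst hwy
            exact Finset.mem_union_right _ (Finset.mem_insert_self _ _)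
          · have hwA : w ∈ A := (hA w).2 ⟨hwx, hwy⟩
            have hmem : (⟨w, hwA⟩ : ↥A) ∈ D₀ ∪ S₀ := hequ ▸ Finset.mem_univ _
            rcases Finset.mem_union.1 hmem with h | h
            · exact Finset.mem_union_left _
                (Finset.mem_insert_of_mem (Finset.mem_image_of_mem _ h))
            · exact Finset.mem_union_right _
                (Finset.mem_insert_of_mem (Finset.mem_image_of_mem _ h))
      · intro v₀ hv₀D hv₀S
        have hvx : (↑v₀ : W) ≠ x := ((hA _).1 v₀.2).1
        have hvy : (↑v₀ : W) ≠ y := ((hA _).1 v₀.2).2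
        refine ih ↑v₀ ?_ ?_ D₀ (insert v₀ S₀) rfl ?_
        · intro hmem
          rcases Finset.mem_insert.1 hmem with h | h
          · exact hvx h
          · exact hv₀D (mem_img h)
        · intro hmem
          rcases Finset.mem_insert.1 hmem with h | h
          · exact hvy h
          · exact hv₀S (mem_img h)
        · rw [Finset.image_insert, Finset.insert_comm]

lemma sInf_coe_nat_image {T : Set ℕ} (hT : T.Nonempty) :
    sInf ((fun m : ℕ => (m : ℕ∞)) '' T) = ((sInf T : ℕ) : ℕ∞) := by
  apply le_antisymm
  · exact sInf_le ⟨_, Nat.sInf_mem hT, rfl⟩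
  · refine le_sInf ?_
    rintro b ⟨m, hm, rfl⟩
    show ((sInf T : ℕ) : ℕ∞) ≤ ((m : ℕ) : ℕ∞)
    exact_mod_cast Nat.sInf_le hm

lemma core (hxy : G.Adj x y) (hx : ∀ w, G.Adj x w → w = y)
    (hA : ∀ w, w ∈ A ↔ (w ≠ x ∧ w ≠ y)) [Fintype ↥A] :
    gammaMB' G = 1 + gammaMB' (G.induce A) := by
  have hxny : x ≠ y := hxy.ne
  unfold gammaMB' gammaMBRes'
  have hup : ∀ m : ℕ, MBWin (G.induce A) ∅ false m ∅ ∅ → MBWin G ∅ false (m+1) ∅ ∅ := by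
    intro m hm
    have := (up hxy hA hm).1
    simpa using this
  have hlow : ∀ m : ℕ, MBWin G ∅ false m ∅ ∅ →
      ∃ kk, m = kk + 1 ∧ MBWin (G.induce A) ∅ false kk ∅ ∅ := by
    intro m hm
    cases hm with
    | win _ _ _ _ hd =>
      obtain ⟨u, hu, -⟩ := hd x (Set.notMem_empty _)
      exact absurd hu (Finset.notMem_empty _)
    | smove _ _ _ hne hbr =>
      have h2 := hbr y (Finset.notMem_empty _) (Finset.notMem_empty _)
      cases h2 with
      | win _ _ _ _ hd =>
        obtain ⟨u, hu, -⟩ := hd x (Set.notMem_empty _)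
        exact absurd hu (Finset.notMem_empty _)
      | dmove kk _ _ v hvD hvS hsub =>
        have hvy : v ≠ y := fun h => hvS (h ▸ Finset.mem_insert_self _ _)
        by_cases hvx : v = x
        · subst hvx
          exact ⟨kk, rfl, low hxy hx hA hsub ∅ ∅ (by simp) (by simp)⟩
        · exfalso
          cases hsub with
          | win _ _ _ _ hd =>
            obtain ⟨u, hu, hcov⟩ := hd x (Set.notMem_empty _)
            rcases Finset.mem_insert.1 hu with rfl | h
            · rcases hcov with h | h
              · exact hvx h
              · exact hvy (hx u h.symm)
            · exact absurd h (Finset.notMem_empty _)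
          | smove _ _ _ hne' hbr' =>
            have hxD : x ∉ insert v (∅ : Finset W) := by
              intro hmem
              rcases Finset.mem_insert.1 hmem with h | h
              · exact hvx h.symm
              · exact absurd h (Finset.notMem_empty _)
            have hxS : x ∉ insert y (∅ : Finset W) := by
              intro hmem
              rcases Finset.mem_insert.1 hmem with h | h
              · exact hxny h
              · exact absurd h (Finset.notMem_empty _)
            have hyD : y ∉ insert v (∅ : Finset W) := by
              intro hmem
              rcases Finset.mem_insert.1 hmem with h | h
              · exact hvy h.symm
              · exact absurd h (Finset.notMem_empty _)
            have h3 := hbr' x hxD hxS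
            exact noWin hx h3 hxD hyD (Finset.mem_insert_self _ _)
              (Finset.mem_insert_of_mem (Finset.mem_insert_self _ _))
  rcases Set.eq_empty_or_nonempty {m : ℕ | MBWin (G.induce A) ∅ false m ∅ ∅} with hTe | hTne
  · have hRe : {m : ℕ | MBWin G ∅ false m ∅ ∅} = ∅ := by
      ext m
      simp only [Set.mem_empty_iff_false, iff_false, Set.mem_setOf_eq]
      intro hm
      obtain ⟨kk, -, hk⟩ := hlow m hm
      have : kk ∈ {m : ℕ | MBWin (G.induce A) ∅ false m ∅ ∅} := hk
      rw [hTe] at this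
      exact this
    rw [hTe, hRe]
    simp
  · have hRne : {m : ℕ | MBWin G ∅ false m ∅ ∅}.Nonempty :=
      ⟨sInf {m : ℕ | MBWin (G.induce A) ∅ false m ∅ ∅} + 1, hup _ (Nat.sInf_mem hTne)⟩
    rw [sInf_coe_nat_image hTne, sInf_coe_nat_image hRne]
    have heq : sInf {m : ℕ | MBWin G ∅ false m ∅ ∅}
        = sInf {m : ℕ | MBWin (G.induce A) ∅ false m ∅ ∅} + 1 := by
      apply le_antisymm
      · exact Nat.sInf_le (hup _ (Nat.sInf_mem hTne))
      · obtain ⟨kk, hk1, hk2⟩ := hlow _ (Nat.sInf_mem hRne)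
        rw [hk1]
        exact Nat.succ_le_succ (Nat.sInf_le hk2)
    rw [heq]
    push_cast
    rw [add_comm]

end MBAux3

section MBAux4
set_option linter.unusedSectionVars false
set_option maxHeartbeats 1000000

lemma mbwin_map {W₁ W₂ : Type*} [Fintype W₁] [DecidableEq W₁] [Fintype W₂] [DecidableEq W₂]
    {G₁ : SimpleGraph W₁} {G₂ : SimpleGraph W₂} (e : G₁ ≃g G₂) :
    ∀ {t : Bool} {k : ℕ} {D S : Finset W₁}, MBWin G₁ ∅ t k D S →
      MBWin G₂ ∅ t k (D.image e) (S.image e) := by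
  have hinj : Function.Injective (⇑e) := e.toEquiv.injective
  intro t k D S h
  induction h with
  | win t k D S hd =>
    refine MBWin.win _ _ _ _ ?_
    intro v _
    obtain ⟨u, hu, hcov⟩ := hd (e.symm v) (Set.notMem_empty _)
    refine ⟨e u, Finset.mem_image_of_mem _ hu, ?_⟩
    rcases hcov with rfl | hadj
    · left
      exact e.apply_symm_apply v
    · right
      have h2 : G₂.Adj (e u) (e (e.symm v)) := e.map_adj_iff.2 hadj
      rwa [e.apply_symm_apply] at h2
  | dmove k D S v hvD hvS hsub ih =>
    refine MBWin.dmove k _ _ (e v) ?_ ?_ ?_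
    · intro hmem
      obtain ⟨u, hu, he⟩ := Finset.mem_image.1 hmem
      exact hvD ((hinj he) ▸ hu)
    · intro hmem
      obtain ⟨u, hu, he⟩ := Finset.mem_image.1 hmem
      exact hvS ((hinj he) ▸ hu)
    · rw [show insert (e v) (D.image e) = (insert v D).image e from
        (Finset.image_insert _ _ _).symm]
      exact ih
  | smove k D S hne hbr ih =>
    refine MBWin.smove _ _ _ ?_ ?_
    · intro hequ
      obtain ⟨w, hw⟩ := exists_not_mem_of_ne_univ hne
      have hmem : e w ∈ D.image e ∪ S.image e := hequ ▸ Finset.mem_univ _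
      rcases Finset.mem_union.1 hmem with h | h <;>
        obtain ⟨u, hu, he⟩ := Finset.mem_image.1 h
      · exact hw (Finset.mem_union_left _ ((hinj he) ▸ hu))
      · exact hw (Finset.mem_union_right _ ((hinj he) ▸ hu))
    · intro v hvD hvS
      have h1 : e.symm v ∉ D := fun h => hvD (by
        rw [← e.apply_symm_apply v]; exact Finset.mem_image_of_mem _ h)
      have h2 : e.symm v ∉ S := fun h => hvS (by
        rw [← e.apply_symm_apply v]; exact Finset.mem_image_of_mem _ h)
      have h3 := ih (e.symm v) h1 h2
      rwa [Finset.image_insert, e.apply_symm_apply] at h3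

lemma gammaMB'_congr {W₁ W₂ : Type*} [Fintype W₁] [DecidableEq W₁] [Fintype W₂]
    [DecidableEq W₂] {G₁ : SimpleGraph W₁} {G₂ : SimpleGraph W₂} (e : G₁ ≃g G₂) :
    gammaMB' G₁ = gammaMB' G₂ := by
  unfold gammaMB' gammaMBRes'
  have hset : {m : ℕ | MBWin G₁ ∅ false m ∅ ∅} = {m : ℕ | MBWin G₂ ∅ false m ∅ ∅} := by
    ext m
    constructor
    · intro h
      simpa using mbwin_map e h
    · intro h
      simpa using mbwin_map e.symm h
  rw [hset]

variable {V : Type*}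

lemma pendant_extract [DecidableEq V] {G : SimpleGraph V} {s t : Finset V}
    (h : PendantStep G s t) :
    ∃ x y, x ∈ s ∧ y ∈ s ∧ G.Adj x y ∧ (∀ w ∈ s, G.Adj x w → w = y) ∧
      t = (s.erase x).erase y := by
  rcases h with ⟨x, hxs, y, hys, hadj, hleaf, -, ht⟩ | ⟨x, hxs, y, hys, hadj, hsxy, ht⟩
  · exact ⟨x, y, hxs, hys, hadj, hleaf, ht⟩
  · refine ⟨x, y, hxs, hys, hadj, ?_, ?_⟩
    · intro w hw hadj'
      rw [hsxy] at hw
      rcases Finset.mem_insert.1 hw with rfl | hw'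
      · exact absurd rfl hadj'.ne
      · exact Finset.mem_singleton.1 hw'
    · rw [ht, hsxy]
      ext w
      simp only [Finset.mem_erase, Finset.mem_insert, Finset.mem_singleton,
        Finset.notMem_empty, false_iff]
      tauto

lemma card_le_of_chain [DecidableEq V] {G : SimpleGraph V} {a b : Finset V}
    (h : Relation.ReflTransGen (PendantStep G) a b) : b.card ≤ a.card := by
  induction h with
  | refl => exact le_rfl
  | tail hab hbc ih =>
    obtain ⟨x, y, -, -, -, -, ht⟩ := pendant_extract hbc
    refine le_trans ?_ ih
    rw [ht]
    exact Finset.card_le_card ((Finset.erase_subset _ _).trans (Finset.erase_subset _ _))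

end MBAux4

set_option maxHeartbeats 1000000 in
/-- Let `G` be a finite simple graph, `R(G)` a residual graph of `G`, and
`H = G − V(R(G))`.  Then `γ_MB'(G) = n(H)/2 + γ_MB'(R(G))` (the right-hand side being
`∞` when `γ_MB'(R(G)) = ∞`). -/
theorem gammaMB'_eq_of_residual [Fintype V] [DecidableEq V] (G : SimpleGraph V)
    (s : Finset V) (hs : IsResidualSet G s) :
    gammaMB' G =
      (((Fintype.card V - s.card) / 2 : ℕ) : ℕ∞) + gammaMB' (G.induce (↑s : Set V)) := by
  have key : ∀ a : Finset V, Relation.ReflTransGen (PendantStep G) a s →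
      gammaMB' (G.induce (↑a : Set V)) =
        (((a.card - s.card) / 2 : ℕ) : ℕ∞) + gammaMB' (G.induce (↑s : Set V)) := by
    intro a h
    induction h using Relation.ReflTransGen.head_induction_on with
    | refl => simp
    | head hstep hrest ih =>
      rename_i a c
      obtain ⟨x, y, hxa, hya, hadj, hleaf, ht⟩ := pendant_extract hstep
      subst ht
      set x' : ↥(↑a : Set V) := ⟨x, Finset.mem_coe.2 hxa⟩ with hx'
      set y' : ↥(↑a : Set V) := ⟨y, Finset.mem_coe.2 hya⟩ with hy'
      have hadj' : (G.induce (↑a : Set V)).Adj x' y' := hadj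
      have hleaf' : ∀ w : ↥(↑a : Set V), (G.induce (↑a : Set V)).Adj x' w → w = y' := by
        intro w hw
        exact Subtype.ext (hleaf ↑w (Finset.mem_coe.1 w.2) hw)
      haveI : Fintype ↥({w : ↥(↑a : Set V) | w ≠ x' ∧ w ≠ y'}) :=
        (Set.toFinite _).fintype
      have hA : ∀ w : ↥(↑a : Set V),
          w ∈ ({w : ↥(↑a : Set V) | w ≠ x' ∧ w ≠ y'} : Set _) ↔ (w ≠ x' ∧ w ≠ y') :=
        fun w => Iff.rfl
      have hcore := core hadj' hleaf' hA
      have hmemt : ∀ w : V, (w ∈ (a.erase x).erase y) ↔ (w ∈ a ∧ w ≠ x ∧ w ≠ y) := by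
        intro w
        simp only [Finset.mem_erase]
        tauto
      let E : ↥({w : ↥(↑a : Set V) | w ≠ x' ∧ w ≠ y'} : Set _) ≃
          ↥(↑((a.erase x).erase y) : Set V) :=
        { toFun := fun w => ⟨↑↑w, Finset.mem_coe.2 ((hmemt _).2
            ⟨Finset.mem_coe.1 w.1.2, fun h => w.2.1 (Subtype.ext h),
              fun h => w.2.2 (Subtype.ext h)⟩)⟩
          invFun := fun u => ⟨⟨↑u, Finset.mem_coe.2
              ((hmemt ↑u).1 (Finset.mem_coe.1 u.2)).1⟩,
            ⟨fun h => ((hmemt ↑u).1 (Finset.mem_coe.1 u.2)).2.1 (congrArg Subtype.val h),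
              fun h => ((hmemt ↑u).1 (Finset.mem_coe.1 u.2)).2.2 (congrArg Subtype.val h)⟩⟩
          left_inv := fun w => by
            apply Subtype.ext
            apply Subtype.ext
            rfl
          right_inv := fun u => by
            apply Subtype.ext
            rfl }
      have e : (G.induce (↑a : Set V)).induce ({w : ↥(↑a : Set V) | w ≠ x' ∧ w ≠ y'} : Set _)
          ≃g G.induce (↑((a.erase x).erase y) : Set V) := ⟨E, Iff.rfl⟩
      have hiso := gammaMB'_congr e
      have h1 : y ∈ a.erase x := Finset.mem_erase.2 ⟨hadj.ne', hya⟩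
      have h3 : s.card ≤ ((a.erase x).erase y).card := card_le_of_chain hrest
      have h5 : (a.card - s.card) / 2 = (((a.erase x).erase y).card - s.card) / 2 + 1 := by
        have hx1 : 1 ≤ a.card := Finset.card_pos.2 ⟨x, hxa⟩
        have e1 : ((a.erase x).erase y).card = (a.erase x).card - 1 :=
          Finset.card_erase_of_mem h1
        have e2 : (a.erase x).card = a.card - 1 := Finset.card_erase_of_mem hxa
        have h4 : 1 ≤ (a.erase x).card := Finset.card_pos.2 ⟨y, h1⟩
        have hh : a.card - s.card = (((a.erase x).erase y).card - s.card) + 2 := by omega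
        rw [hh, Nat.add_div_right _ (by norm_num : 0 < 2)]
      rw [hcore, hiso, ih, h5]
      push_cast
      ring
  obtain ⟨hchain, -⟩ := hs
  have hkey := key Finset.univ hchain
  have e2 : G.induce ((Finset.univ : Finset V) : Set V) ≃g G :=
    ⟨{ toFun := fun w => ↑w
       invFun := fun v => ⟨v, by simp⟩
       left_inv := fun w => Subtype.ext rfl
       right_inv := fun v => rfl }, Iff.rfl⟩
  rw [gammaMB'_congr e2] at hkey
  simpa [Finset.card_univ] using hkey
end
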